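/- arXiv:1302.3971 — 4 statements merged into one kernel-verified Lean document; each statement's English description precedes it below -/
import Mathlib

section
/- Let P¹ = (p_i¹) and P² = (p_i²) be feedback families and let λ ∈ (0,1). Then there exists a feedback family P = (p_i) whose causally conditioned kernel is the pointwise convex combination, i.e. ←P_{0,n}(· | y^{n-1}) = λ ←P¹_{0,n}(· | y^{n-1}) + (1−λ) ←P²_{0,n}(· | y^{n-1}) for every y^{n-1} ∈ Y_{0,n-1}. Likewise, for any two forward families Q¹, Q² and any λ ∈ (0,1) there exists a forward family Q with →Q_{0,n}(· | x^n) = λ →Q¹_{0,n}(· | x^n) + (1−λ) →Q²_{0,n}(· | x^n) for every x^n ∈ X_{0,n}. In other words, the set of causally conditioned kernels arising from feedback families and the set arising from forward families are both convex. -/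
open MeasureTheory ProbabilityTheory Filter
open scoped ENNReal NNReal

namespace PaperDI

lemma measurable_finSnoc {Z : ℕ → Type*} [∀ i, MeasurableSpace (Z i)] (k : ℕ) :
    Measurable (fun p : (∀ j : Fin k, Z j) × Z k =>
      (Fin.snoc p.1 p.2 : ∀ j : Fin (k + 1), Z j)) := by
  apply measurable_pi_lambda
  intro j
  induction j using Fin.lastCases with
  | last => simpa using measurable_snd
  | cast i =>
    simp only [Fin.snoc_castSucc]
    exact (measurable_pi_apply i).comp measurable_fst

/-- Restriction of a prefix of length `k+1` to the prefix of length `k`. -/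
def restr {Z : ℕ → Type*} (k : ℕ) (z : ∀ j : Fin (k + 1), Z j) : ∀ j : Fin k, Z j :=
  fun j => z j.castSucc

lemma measurable_restr {Z : ℕ → Type*} [∀ i, MeasurableSpace (Z i)] (k : ℕ) :
    Measurable (restr (Z := Z) k) :=
  measurable_pi_lambda _ fun _ => measurable_pi_apply _

variable (X Y : ℕ → Type*) [∀ i, MeasurableSpace (X i)] [∀ i, MeasurableSpace (Y i)]

/-- A feedback family `(p_0, …, p_n)`: `p_0` is a probability measure on `X_0` (a Markov
kernel from the one-point space of empty prefixes) and `p_i` is a Markov kernel from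
`X_{0,i-1} × Y_{0,i-1}` to `X_i`. -/
structure FeedbackFamily (n : ℕ) where
  p : ∀ i : Fin (n + 1), Kernel ((∀ j : Fin (i : ℕ), X j) × (∀ j : Fin (i : ℕ), Y j)) (X i)
  markov : ∀ i, IsMarkovKernel (p i)

/-- A forward family `(q_0, …, q_n)`: `q_i` is a Markov kernel from
`Y_{0,i-1} × X_{0,i}` to `Y_i`. -/
structure ForwardFamily (n : ℕ) where
  q : ∀ i : Fin (n + 1), Kernel ((∀ j : Fin (i : ℕ), Y j) × (∀ j : Fin ((i : ℕ) + 1), X j)) (Y i)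
  markov : ∀ i, IsMarkovKernel (q i)

variable {X Y} {n : ℕ}

/-- The causally conditioned kernel `←P_{0,k}` from `Y_{0,k-1}` to `X_{0,k}`. -/
noncomputable def back (P : FeedbackFamily X Y n) :
    (k : ℕ) → k ≤ n → Kernel (∀ j : Fin k, Y j) (∀ j : Fin (k + 1), X j)
  | 0, _ =>
      Kernel.map ((P.p ⟨0, Nat.succ_pos n⟩).comap (fun _ => default) measurable_const)
        (fun x0 => (Fin.snoc default x0 : ∀ j : Fin 1, X j))
  | (k + 1), h =>
      Kernel.map
        (((back P k (by omega)).comap (restr k) (measurable_restr k)) ⊗ₖ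
          ((P.p ⟨k + 1, by omega⟩).comap
            (fun t : (∀ j : Fin (k + 1), Y j) × (∀ j : Fin (k + 1), X j) => (t.2, t.1))
            (measurable_snd.prodMk measurable_fst)))
        (fun t : (∀ j : Fin (k + 1), X j) × X (k + 1) =>
          (Fin.snoc t.1 t.2 : ∀ j : Fin (k + 2), X j))

/-- The causally conditioned kernel `→Q_{0,k}` from `X_{0,k}` to `Y_{0,k}`. -/
noncomputable def fwd (Q : ForwardFamily X Y n) :
    (k : ℕ) → k ≤ n → Kernel (∀ j : Fin (k + 1), X j) (∀ j : Fin (k + 1), Y j)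
  | 0, _ =>
      Kernel.map ((Q.q ⟨0, Nat.succ_pos n⟩).comap (fun x => (default, x))
          (measurable_const.prodMk measurable_id))
        (fun y0 => (Fin.snoc default y0 : ∀ j : Fin 1, Y j))
  | (k + 1), h =>
      Kernel.map
        (((fwd Q k (by omega)).comap (restr (k + 1)) (measurable_restr (k + 1))) ⊗ₖ
          ((Q.q ⟨k + 1, by omega⟩).comap
            (fun t : (∀ j : Fin (k + 2), X j) × (∀ j : Fin (k + 1), Y j) => (t.2, t.1))
            (measurable_snd.prodMk measurable_fst)))
        (fun t : (∀ j : Fin (k + 1), Y j) × Y (k + 1) =>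
          (Fin.snoc t.1 t.2 : ∀ j : Fin (k + 2), Y j))

/-- The interleaved joint measure of `←P ⊗ →Q` on prefixes of length `k`. -/
noncomputable def jointAux (P : FeedbackFamily X Y n) (Q : ForwardFamily X Y n) :
    (k : ℕ) → k ≤ n + 1 → Measure ((∀ j : Fin k, X j) × (∀ j : Fin k, Y j))
  | 0, _ => Measure.dirac default
  | (k + 1), h =>
      let μ1 := (jointAux P Q k (by omega)) ⊗ₘ (P.p ⟨k, by omega⟩)
      let μ2 := μ1.map
          (fun t : ((∀ j : Fin k, X j) × (∀ j : Fin k, Y j)) × X k =>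
            (t.1.2, (Fin.snoc t.1.1 t.2 : ∀ j : Fin (k + 1), X j)))
      let μ3 := μ2 ⊗ₘ (Q.q ⟨k, by omega⟩)
      μ3.map
          (fun t : ((∀ j : Fin k, Y j) × (∀ j : Fin (k + 1), X j)) × Y k =>
            (t.1.2, (Fin.snoc t.1.1 t.2 : ∀ j : Fin (k + 1), Y j)))

/-- The joint measure `←P ⊗ →Q` on `X_{0,n} × Y_{0,n}`. -/
noncomputable def joint (P : FeedbackFamily X Y n) (Q : ForwardFamily X Y n) :
    Measure ((∀ j : Fin (n + 1), X j) × (∀ j : Fin (n + 1), Y j)) :=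
  jointAux P Q (n + 1) le_rfl

/-- The marginal `ν_{0,n}` of `←P ⊗ →Q` on `Y_{0,n}`. -/
noncomputable def nu (P : FeedbackFamily X Y n) (Q : ForwardFamily X Y n) :
    Measure (∀ j : Fin (n + 1), Y j) :=
  (joint P Q).map Prod.snd

/-- The measure `←P ⊗ λ` on `X_{0,n} × Y_{0,n}`, i.e. the measure
`←P_{0,n}(dx^n | y^{n-1}) ⊗ λ(dy^n)`. -/
noncomputable def backProd (P : FeedbackFamily X Y n) (lam : Measure (∀ j : Fin (n + 1), Y j)) :
    Measure ((∀ j : Fin (n + 1), X j) × (∀ j : Fin (n + 1), Y j)) :=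
  (lam ⊗ₘ ((back P n le_rfl).comap (restr n) (measurable_restr n))).map Prod.swap

open Classical in
/-- Kullback-Leibler divergence (relative entropy) `D(μ ‖ ν)`, with the convention
`D(μ ‖ ν) = ∞` when absolute continuity fails. -/
noncomputable def KL {Z : Type*} [MeasurableSpace Z] (μ ν : Measure Z) : ℝ≥0∞ :=
  if μ ≪ ν ∧ Integrable (llr μ ν) μ then ENNReal.ofReal (∫ z, llr μ ν z ∂μ) else ⊤

/-- Directed information `I(←P, →Q) = D(←P ⊗ →Q ‖ ←P ⊗ ν_{0,n})`. -/
noncomputable def DI (P : FeedbackFamily X Y n) (Q : ForwardFamily X Y n) : ℝ≥0∞ :=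
  KL (joint P Q) (backProd P (nu P Q))

/-- Weak convergence of a sequence of measures: integrals of every bounded continuous
real-valued function converge. -/
def WeakTendsto {Z : Type*} [MeasurableSpace Z] [TopologicalSpace Z]
    (μ : ℕ → Measure Z) (μ0 : Measure Z) : Prop :=
  ∀ f : BoundedContinuousFunction Z ℝ,
    Tendsto (fun α => ∫ z, f z ∂(μ α)) atTop (nhds (∫ z, f z ∂μ0))

/-- Uniform tightness of a family of measures. -/
def UniformlyTight {Z : Type*} [MeasurableSpace Z] [TopologicalSpace Z]
    (M : Set (Measure Z)) : Prop :=
  ∀ ε : ℝ≥0∞, 0 < ε → ∃ K : Set Z, IsCompact K ∧ ∀ μ ∈ M, 1 - ε ≤ μ K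

/-- The marginal `π_i` of `←P ⊗ →Q` on `X_{0,i} × Y_{0,i-1}`. -/
noncomputable def margin (P : FeedbackFamily X Y n) (Q : ForwardFamily X Y n) (i : Fin (n + 1)) :
    Measure ((∀ j : Fin ((i : ℕ) + 1), X j) × (∀ j : Fin (i : ℕ), Y j)) :=
  (joint P Q).map (fun t =>
    ((fun j : Fin ((i : ℕ) + 1) => t.1 (Fin.castLE i.isLt j)),
     (fun j : Fin (i : ℕ) => t.2 (Fin.castLE i.isLt.le j))))

/-- The iterated product measure of a tuple of kernels `(λ_0, …, λ_n)`,
`λ_i : Y_{0,i-1} → Y_i`, on prefixes of length `k`. -/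
noncomputable def chain {Z : ℕ → Type*} [∀ i, MeasurableSpace (Z i)] {n : ℕ}
    (lam : ∀ i : Fin (n + 1), Kernel (∀ j : Fin (i : ℕ), Z j) (Z i)) :
    (k : ℕ) → k ≤ n + 1 → Measure (∀ j : Fin k, Z j)
  | 0, _ => Measure.dirac default
  | (k + 1), h =>
      ((chain lam k (by omega)) ⊗ₘ (lam ⟨k, by omega⟩)).map
        (fun t : (∀ j : Fin k, Z j) × Z k => (Fin.snoc t.1 t.2 : ∀ j : Fin (k + 1), Z j))

/-- The joint measure `←S ⊗ →R` on `X_{0,n} × Y_{0,n}` determined by a reversed pair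
`(S, R)`; a reversed pair is formally a feedback family and a forward family with the
roles of `X` and `Y` interchanged. -/
noncomputable def revJoint (S : FeedbackFamily Y X n) (R : ForwardFamily Y X n) :
    Measure ((∀ j : Fin (n + 1), X j) × (∀ j : Fin (n + 1), Y j)) :=
  (joint S R).map Prod.swap

/-- `∫ log(dσ/dπ) dμ`, as an extended real number (integral of the positive part minus
integral of the negative part). -/
noncomputable def elogInt {Z : Type*} [MeasurableSpace Z] (σ π μ : Measure Z) : EReal :=
  ((∫⁻ z, ENNReal.ofReal (llr σ π z) ∂μ : ℝ≥0∞) : EReal) -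
    ((∫⁻ z, ENNReal.ofReal (-llr σ π z) ∂μ : ℝ≥0∞) : EReal)

/-- `∫ |log(dμ/dν)| dμ`. -/
noncomputable def absKL {Z : Type*} [MeasurableSpace Z] (μ ν : Measure Z) : ℝ≥0∞ :=
  ∫⁻ z, ENNReal.ofReal |llr μ ν z| ∂μ

section Topology

variable [∀ i, TopologicalSpace (X i)] [∀ i, TopologicalSpace (Y i)]

/-- Condition (CA): each `p_i` is weakly (Feller) continuous in the conditioning
variables `(x^{i-1}, y^{i-1})`. -/
def CondCA (P : FeedbackFamily X Y n) : Prop :=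
  ∀ (i : Fin (n + 1)) (g : BoundedContinuousFunction (X i) ℝ),
    Continuous (fun t : (∀ j : Fin (i : ℕ), X j) × (∀ j : Fin (i : ℕ), Y j) =>
      ∫ x, g x ∂(P.p i t))

/-- Condition (CB): each `q_i` is weakly (Feller) continuous in the conditioning
variables `(x^i, y^{i-1})`. -/
def CondCB (Q : ForwardFamily X Y n) : Prop :=
  ∀ (i : Fin (n + 1)) (g : BoundedContinuousFunction (Y i) ℝ),
    Continuous (fun t : (∀ j : Fin ((i : ℕ) + 1), X j) × (∀ j : Fin (i : ℕ), Y j) =>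
      ∫ y, g y ∂(Q.q i (t.2, t.1)))

end Topology


section ConvexAux

variable {X Y : ℕ → Type*} {n : ℕ} [∀ i, MeasurableSpace (X i)] [∀ i, MeasurableSpace (Y i)]

/-- Convex mixture of two kernels with coefficients `c1, c2`. -/
noncomputable def mixK {α β : Type*} [MeasurableSpace α] [MeasurableSpace β]
    (c1 c2 : ℝ≥0∞) (κ η : Kernel α β) : Kernel α β :=
  ⟨fun a => c1 • κ a + c2 • η a,
    Measure.measurable_of_measurable_coe _ fun s hs => by
      simp only [Measure.add_apply, Measure.smul_apply, smul_eq_mul]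
      exact ((κ.measurable_coe hs).const_mul c1).add ((η.measurable_coe hs).const_mul c2)⟩

@[simp] lemma mixK_apply {α β : Type*} [MeasurableSpace α] [MeasurableSpace β]
    (c1 c2 : ℝ≥0∞) (κ η : Kernel α β) (a : α) :
    mixK c1 c2 κ η a = c1 • κ a + c2 • η a := rfl

lemma mixK_isMarkov {α β : Type*} [MeasurableSpace α] [MeasurableSpace β]
    {c1 c2 : ℝ≥0∞} (hc : c1 + c2 = 1) (κ η : Kernel α β)
    [IsMarkovKernel κ] [IsMarkovKernel η] : IsMarkovKernel (mixK c1 c2 κ η) := by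
  constructor
  intro a
  constructor
  rw [mixK_apply, Measure.add_apply, Measure.smul_apply, Measure.smul_apply,
    measure_univ, measure_univ, smul_eq_mul, smul_eq_mul, mul_one, mul_one, hc]

lemma map_mixK {α β γ : Type*} [MeasurableSpace α] [MeasurableSpace β] [MeasurableSpace γ]
    (c1 c2 : ℝ≥0∞) (κ η : Kernel α β) {f : β → γ} (hf : Measurable f) :
    Kernel.map (mixK c1 c2 κ η) f = mixK c1 c2 (Kernel.map κ f) (Kernel.map η f) := by
  ext1 a
  rw [Kernel.map_apply _ hf, mixK_apply, mixK_apply, Kernel.map_apply _ hf,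
    Kernel.map_apply _ hf, Measure.map_add _ _ hf, Measure.map_smul, Measure.map_smul]

lemma comap_mixK {α β γ : Type*} [MeasurableSpace α] [MeasurableSpace β] [MeasurableSpace γ]
    (c1 c2 : ℝ≥0∞) (κ η : Kernel α β) {f : γ → α} (hf : Measurable f) :
    Kernel.comap (mixK c1 c2 κ η) f hf = mixK c1 c2 (Kernel.comap κ f hf) (Kernel.comap η f hf) := by
  ext1 a
  rw [Kernel.comap_apply, mixK_apply, mixK_apply, Kernel.comap_apply, Kernel.comap_apply]

lemma kmap_map {α β γ δ : Type*} [MeasurableSpace α] [MeasurableSpace β] [MeasurableSpace γ]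
    [MeasurableSpace δ] (κ : Kernel α β) {f : β → γ} {g : γ → δ}
    (hf : Measurable f) (hg : Measurable g) :
    Kernel.map (Kernel.map κ f) g = Kernel.map κ (g ∘ f) := by
  ext1 a
  rw [Kernel.map_apply _ hg, Kernel.map_apply _ hf, Kernel.map_apply _ (hg.comp hf),
    Measure.map_map hg hf]

lemma comap_comap_swap {α β γ : Type*} [MeasurableSpace α] [MeasurableSpace β] [MeasurableSpace γ]
    (κ : Kernel (α × β) γ) :
    Kernel.comap (Kernel.comap κ (fun t : β × α => (t.2, t.1))
        (measurable_snd.prodMk measurable_fst))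
      (fun t : α × β => (t.2, t.1)) (measurable_snd.prodMk measurable_fst) = κ := by
  ext1 a
  rw [Kernel.comap_apply, Kernel.comap_apply]

lemma back_isMarkov (P : FeedbackFamily X Y n) :
    ∀ (k : ℕ) (h : k ≤ n), IsMarkovKernel (back P k h)
  | 0, h => by
      rw [back]
      haveI := P.markov ⟨0, Nat.succ_pos n⟩
      exact Kernel.IsMarkovKernel.map _
        ((measurable_finSnoc 0).comp (measurable_const.prodMk measurable_id))
  | (k + 1), h => by
      rw [back]
      haveI := back_isMarkov P k (by omega)
      haveI := P.markov ⟨k + 1, by omega⟩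
      exact Kernel.IsMarkovKernel.map _ (measurable_finSnoc (k + 1))

lemma fwd_isMarkov (Q : ForwardFamily X Y n) :
    ∀ (k : ℕ) (h : k ≤ n), IsMarkovKernel (fwd Q k h)
  | 0, h => by
      rw [fwd]
      haveI := Q.markov ⟨0, Nat.succ_pos n⟩
      exact Kernel.IsMarkovKernel.map _
        ((measurable_finSnoc 0).comp (measurable_const.prodMk measurable_id))
  | (k + 1), h => by
      rw [fwd]
      haveI := fwd_isMarkov Q k (by omega)
      haveI := Q.markov ⟨k + 1, by omega⟩
      exact Kernel.IsMarkovKernel.map _ (measurable_finSnoc (k + 1))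

lemma restr_comp_snoc {Z : ℕ → Type*} (k : ℕ) :
    (restr (Z := Z) k) ∘ (fun t : (∀ j : Fin k, Z j) × Z k =>
      (Fin.snoc t.1 t.2 : ∀ j : Fin (k + 1), Z j)) = Prod.fst := by
  funext t
  funext j
  simp [restr, Fin.snoc_castSucc]

/-- Split a prefix of length `k + 1` into the prefix of length `k` and the last entry. -/
def splitF {Z : ℕ → Type*} (k : ℕ) (z : ∀ j : Fin (k + 1), Z j) :
    (∀ j : Fin k, Z j) × Z k :=
  (restr k z, z (Fin.last k))

lemma snoc_comp_split {Z : ℕ → Type*} (k : ℕ) :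
    (fun t : (∀ j : Fin k, Z j) × Z k => (Fin.snoc t.1 t.2 : ∀ j : Fin (k + 1), Z j)) ∘
      (splitF (Z := Z) k) = id := by
  funext z
  exact Fin.snoc_init_self z

lemma measurable_split {Z : ℕ → Type*} [∀ i, MeasurableSpace (Z i)] (k : ℕ) :
    Measurable (splitF (Z := Z) k) :=
  (measurable_restr k).prodMk (measurable_pi_apply _)

lemma map_back_restr (P : FeedbackFamily X Y n) (k : ℕ) (h : k + 1 ≤ n) :
    Kernel.map (back P (k + 1) h) (restr (k + 1)) =
      Kernel.comap (back P k (by omega)) (restr k) (measurable_restr k) := by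
  rw [back]
  haveI := back_isMarkov P k (by omega : k ≤ n)
  haveI := P.markov ⟨k + 1, by omega⟩
  rw [kmap_map _ (measurable_finSnoc (k + 1)) (measurable_restr (k + 1)),
    restr_comp_snoc (k + 1), ← Kernel.fst_eq, Kernel.fst_compProd]

lemma map_fwd_restr (Q : ForwardFamily X Y n) (k : ℕ) (h : k + 1 ≤ n) :
    Kernel.map (fwd Q (k + 1) h) (restr (k + 1)) =
      Kernel.comap (fwd Q k (by omega)) (restr (k + 1)) (measurable_restr (k + 1)) := by
  rw [fwd]
  haveI := fwd_isMarkov Q k (by omega : k ≤ n)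
  haveI := Q.markov ⟨k + 1, by omega⟩
  rw [kmap_map _ (measurable_finSnoc (k + 1)) (measurable_restr (k + 1)),
    restr_comp_snoc (k + 1), ← Kernel.fst_eq, Kernel.fst_compProd]

end ConvexAux

section ConvexMain

variable {X Y : ℕ → Type*} {n : ℕ}
  [∀ i, TopologicalSpace (X i)] [∀ i, MeasurableSpace (X i)] [∀ i, BorelSpace (X i)]
  [∀ i, PolishSpace (X i)]
  [∀ i, TopologicalSpace (Y i)] [∀ i, MeasurableSpace (Y i)] [∀ i, BorelSpace (Y i)]
  [∀ i, PolishSpace (Y i)]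

open Classical in
/-- The kernels of the mixture feedback family. -/
noncomputable def pmix (P1 P2 : FeedbackFamily X Y n) (c1 c2 : ℝ≥0∞) (hc : c1 + c2 = 1) :
    ∀ i : Fin (n + 1), Kernel ((∀ j : Fin (i : ℕ), X j) × (∀ j : Fin (i : ℕ), Y j)) (X i) :=
  fun i => match i with
  | ⟨0, h0⟩ => mixK c1 c2 (P1.p ⟨0, h0⟩) (P2.p ⟨0, h0⟩)
  | ⟨k + 1, hk⟩ =>
      if hne : Nonempty (X (k + 1)) then
        haveI := hne
        haveI := back_isMarkov P1 (k + 1) (Nat.lt_succ_iff.mp hk)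
        haveI := back_isMarkov P2 (k + 1) (Nat.lt_succ_iff.mp hk)
        haveI : IsMarkovKernel (mixK c1 c2 (back P1 (k + 1) (Nat.lt_succ_iff.mp hk))
            (back P2 (k + 1) (Nat.lt_succ_iff.mp hk))) := mixK_isMarkov hc _ _
        haveI : IsMarkovKernel (Kernel.map (mixK c1 c2 (back P1 (k + 1) (Nat.lt_succ_iff.mp hk))
            (back P2 (k + 1) (Nat.lt_succ_iff.mp hk)))
            (splitF (k + 1))) :=
          Kernel.IsMarkovKernel.map _ (measurable_split (k + 1))
        Kernel.comap
          (Kernel.condKernel (Kernel.map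
            (mixK c1 c2 (back P1 (k + 1) (Nat.lt_succ_iff.mp hk))
              (back P2 (k + 1) (Nat.lt_succ_iff.mp hk)))
            (splitF (k + 1))))
          (fun t : (∀ j : Fin (k + 1), X j) × (∀ j : Fin (k + 1), Y j) => (t.2, t.1))
          (measurable_snd.prodMk measurable_fst)
      else 0

lemma pmix_isMarkov (P1 P2 : FeedbackFamily X Y n) (c1 c2 : ℝ≥0∞) (hc : c1 + c2 = 1) :
    ∀ i, IsMarkovKernel (pmix P1 P2 c1 c2 hc i)
  | ⟨0, h0⟩ => by
      haveI := P1.markov ⟨0, h0⟩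
      haveI := P2.markov ⟨0, h0⟩
      exact mixK_isMarkov hc _ _
  | ⟨k + 1, hk⟩ => by
      rw [pmix]
      split_ifs with hne
      · haveI := hne
        haveI := back_isMarkov P1 (k + 1) (Nat.lt_succ_iff.mp hk)
        haveI := back_isMarkov P2 (k + 1) (Nat.lt_succ_iff.mp hk)
        haveI : IsMarkovKernel (mixK c1 c2 (back P1 (k + 1) (Nat.lt_succ_iff.mp hk))
            (back P2 (k + 1) (Nat.lt_succ_iff.mp hk))) := mixK_isMarkov hc _ _
        haveI : IsMarkovKernel (Kernel.map (mixK c1 c2 (back P1 (k + 1) (Nat.lt_succ_iff.mp hk))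
            (back P2 (k + 1) (Nat.lt_succ_iff.mp hk)))
            (splitF (k + 1))) :=
          Kernel.IsMarkovKernel.map _ (measurable_split (k + 1))
        infer_instance
      · constructor
        intro a
        exfalso
        haveI := P1.markov ⟨k + 1, hk⟩
        have h1 : (P1.p ⟨k + 1, hk⟩ a) Set.univ = 1 := measure_univ
        haveI : IsEmpty (X (k + 1)) := not_nonempty_iff.mp hne
        rw [Set.univ_eq_empty_iff.mpr ‹IsEmpty (X (k + 1))›, measure_empty] at h1
        exact zero_ne_one h1

/-- The mixture feedback family. -/
noncomputable def mixFam (P1 P2 : FeedbackFamily X Y n) (c1 c2 : ℝ≥0∞) (hc : c1 + c2 = 1) :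
    FeedbackFamily X Y n where
  p := pmix P1 P2 c1 c2 hc
  markov := pmix_isMarkov P1 P2 c1 c2 hc

lemma back_mixFam (P1 P2 : FeedbackFamily X Y n) (c1 c2 : ℝ≥0∞) (hc : c1 + c2 = 1) :
    ∀ (k : ℕ) (h : k ≤ n),
      back (mixFam P1 P2 c1 c2 hc) k h = mixK c1 c2 (back P1 k h) (back P2 k h)
  | 0, h => by
      conv_lhs => rw [back]
      conv_rhs => rw [back, back]
      have h0 : (mixFam P1 P2 c1 c2 hc).p ⟨0, Nat.succ_pos n⟩ =
          mixK c1 c2 (P1.p ⟨0, Nat.succ_pos n⟩) (P2.p ⟨0, Nat.succ_pos n⟩) := rfl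
      have hsnoc0 : Measurable (fun x0 : X 0 => (Fin.snoc default x0 : ∀ j : Fin 1, X j)) :=
        (measurable_finSnoc 0).comp (measurable_const.prodMk measurable_id)
      rw [h0, comap_mixK, map_mixK _ _ _ _ hsnoc0]
  | (k + 1), h => by
      by_cases hne : Nonempty (X (k + 1))
      · haveI := hne
        have hk : k ≤ n := by omega
        have hk1 : k + 1 ≤ n := h
        haveI := back_isMarkov P1 (k + 1) hk1
        haveI := back_isMarkov P2 (k + 1) hk1
        haveI := back_isMarkov P1 k hk
        haveI := back_isMarkov P2 k hk
        haveI : IsMarkovKernel (mixK c1 c2 (back P1 (k + 1) hk1) (back P2 (k + 1) hk1)) :=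
          mixK_isMarkov hc _ _
        haveI : IsMarkovKernel (mixK c1 c2 (back P1 k hk) (back P2 k hk)) :=
          mixK_isMarkov hc _ _
        haveI : IsMarkovKernel (Kernel.map (mixK c1 c2 (back P1 (k + 1) hk1)
            (back P2 (k + 1) hk1))
            (splitF (k + 1))) :=
          Kernel.IsMarkovKernel.map _ (measurable_split (k + 1))
        conv_lhs => rw [back]
        have hp : (mixFam P1 P2 c1 c2 hc).p ⟨k + 1, by omega⟩ =
            Kernel.comap
              (Kernel.condKernel (Kernel.map
                (mixK c1 c2 (back P1 (k + 1) hk1) (back P2 (k + 1) hk1))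
                (splitF (k + 1))))
              (fun t : (∀ j : Fin (k + 1), X j) × (∀ j : Fin (k + 1), Y j) => (t.2, t.1))
              (measurable_snd.prodMk measurable_fst) := by
          show pmix P1 P2 c1 c2 hc ⟨k + 1, by omega⟩ = _
          rw [pmix]
          rw [dif_pos hne]
        rw [hp, comap_comap_swap,
          back_mixFam P1 P2 c1 c2 hc k (by omega)]
        have hfst : Kernel.comap (mixK c1 c2 (back P1 k hk) (back P2 k hk)) (restr k)
            (measurable_restr k) =
            Kernel.fst (Kernel.map (mixK c1 c2 (back P1 (k + 1) hk1) (back P2 (k + 1) hk1))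
              (splitF (k + 1))) := by
          rw [Kernel.fst_eq, kmap_map _ (measurable_split (k + 1)) measurable_fst]
          have : Prod.fst ∘ (splitF (Z := X) (k + 1)) = restr (k + 1) := rfl
          rw [this, map_mixK _ _ _ _ (measurable_restr (k + 1)),
            map_back_restr P1 k hk1, map_back_restr P2 k hk1, comap_mixK]
        rw [hfst, Kernel.disintegrate,
          kmap_map _ (measurable_split (k + 1)) (measurable_finSnoc (k + 1)),
          snoc_comp_split (k + 1), Kernel.map_id]
      · haveI : IsEmpty (X (k + 1)) := not_nonempty_iff.mp hne
        haveI : IsEmpty (∀ j : Fin (k + 2), X j) :=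
          ⟨fun f => ‹IsEmpty (X (k + 1))›.false (f (Fin.last (k + 1)))⟩
        ext1 y
        exact Subsingleton.elim _ _

open Classical in
/-- The kernels of the mixture forward family. -/
noncomputable def qmix (Q1 Q2 : ForwardFamily X Y n) (c1 c2 : ℝ≥0∞) (hc : c1 + c2 = 1) :
    ∀ i : Fin (n + 1),
      Kernel ((∀ j : Fin (i : ℕ), Y j) × (∀ j : Fin ((i : ℕ) + 1), X j)) (Y i) :=
  fun i => match i with
  | ⟨0, h0⟩ => mixK c1 c2 (Q1.q ⟨0, h0⟩) (Q2.q ⟨0, h0⟩)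
  | ⟨k + 1, hk⟩ =>
      if hne : Nonempty (Y (k + 1)) then
        haveI := hne
        haveI := fwd_isMarkov Q1 (k + 1) (Nat.lt_succ_iff.mp hk)
        haveI := fwd_isMarkov Q2 (k + 1) (Nat.lt_succ_iff.mp hk)
        haveI : IsMarkovKernel (mixK c1 c2 (fwd Q1 (k + 1) (Nat.lt_succ_iff.mp hk))
            (fwd Q2 (k + 1) (Nat.lt_succ_iff.mp hk))) := mixK_isMarkov hc _ _
        haveI : IsMarkovKernel (Kernel.map (mixK c1 c2 (fwd Q1 (k + 1) (Nat.lt_succ_iff.mp hk))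
            (fwd Q2 (k + 1) (Nat.lt_succ_iff.mp hk)))
            (splitF (k + 1))) :=
          Kernel.IsMarkovKernel.map _ (measurable_split (k + 1))
        Kernel.comap
          (Kernel.condKernel (Kernel.map
            (mixK c1 c2 (fwd Q1 (k + 1) (Nat.lt_succ_iff.mp hk))
              (fwd Q2 (k + 1) (Nat.lt_succ_iff.mp hk)))
            (splitF (k + 1))))
          (fun t : (∀ j : Fin (k + 1), Y j) × (∀ j : Fin (k + 2), X j) => (t.2, t.1))
          (measurable_snd.prodMk measurable_fst)
      else 0

lemma qmix_isMarkov (Q1 Q2 : ForwardFamily X Y n) (c1 c2 : ℝ≥0∞) (hc : c1 + c2 = 1) :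
    ∀ i, IsMarkovKernel (qmix Q1 Q2 c1 c2 hc i)
  | ⟨0, h0⟩ => by
      haveI := Q1.markov ⟨0, h0⟩
      haveI := Q2.markov ⟨0, h0⟩
      exact mixK_isMarkov hc _ _
  | ⟨k + 1, hk⟩ => by
      rw [qmix]
      split_ifs with hne
      · haveI := hne
        haveI := fwd_isMarkov Q1 (k + 1) (Nat.lt_succ_iff.mp hk)
        haveI := fwd_isMarkov Q2 (k + 1) (Nat.lt_succ_iff.mp hk)
        haveI : IsMarkovKernel (mixK c1 c2 (fwd Q1 (k + 1) (Nat.lt_succ_iff.mp hk))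
            (fwd Q2 (k + 1) (Nat.lt_succ_iff.mp hk))) := mixK_isMarkov hc _ _
        haveI : IsMarkovKernel (Kernel.map (mixK c1 c2 (fwd Q1 (k + 1) (Nat.lt_succ_iff.mp hk))
            (fwd Q2 (k + 1) (Nat.lt_succ_iff.mp hk)))
            (splitF (k + 1))) :=
          Kernel.IsMarkovKernel.map _ (measurable_split (k + 1))
        infer_instance
      · constructor
        intro a
        exfalso
        haveI := Q1.markov ⟨k + 1, hk⟩
        have h1 : (Q1.q ⟨k + 1, hk⟩ a) Set.univ = 1 := measure_univ
        haveI : IsEmpty (Y (k + 1)) := not_nonempty_iff.mp hne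
        rw [Set.univ_eq_empty_iff.mpr ‹IsEmpty (Y (k + 1))›, measure_empty] at h1
        exact zero_ne_one h1

/-- The mixture forward family. -/
noncomputable def mixFamQ (Q1 Q2 : ForwardFamily X Y n) (c1 c2 : ℝ≥0∞) (hc : c1 + c2 = 1) :
    ForwardFamily X Y n where
  q := qmix Q1 Q2 c1 c2 hc
  markov := qmix_isMarkov Q1 Q2 c1 c2 hc

lemma fwd_mixFamQ (Q1 Q2 : ForwardFamily X Y n) (c1 c2 : ℝ≥0∞) (hc : c1 + c2 = 1) :
    ∀ (k : ℕ) (h : k ≤ n),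
      fwd (mixFamQ Q1 Q2 c1 c2 hc) k h = mixK c1 c2 (fwd Q1 k h) (fwd Q2 k h)
  | 0, h => by
      conv_lhs => rw [fwd]
      conv_rhs => rw [fwd, fwd]
      have h0 : (mixFamQ Q1 Q2 c1 c2 hc).q ⟨0, Nat.succ_pos n⟩ =
          mixK c1 c2 (Q1.q ⟨0, Nat.succ_pos n⟩) (Q2.q ⟨0, Nat.succ_pos n⟩) := rfl
      have hsnoc0 : Measurable (fun y0 : Y 0 => (Fin.snoc default y0 : ∀ j : Fin 1, Y j)) :=
        (measurable_finSnoc 0).comp (measurable_const.prodMk measurable_id)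
      rw [h0, comap_mixK, map_mixK _ _ _ _ hsnoc0]
  | (k + 1), h => by
      by_cases hne : Nonempty (Y (k + 1))
      · haveI := hne
        have hk : k ≤ n := by omega
        have hk1 : k + 1 ≤ n := h
        haveI := fwd_isMarkov Q1 (k + 1) hk1
        haveI := fwd_isMarkov Q2 (k + 1) hk1
        haveI := fwd_isMarkov Q1 k hk
        haveI := fwd_isMarkov Q2 k hk
        haveI : IsMarkovKernel (mixK c1 c2 (fwd Q1 (k + 1) hk1) (fwd Q2 (k + 1) hk1)) :=
          mixK_isMarkov hc _ _
        haveI : IsMarkovKernel (mixK c1 c2 (fwd Q1 k hk) (fwd Q2 k hk)) :=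
          mixK_isMarkov hc _ _
        haveI : IsMarkovKernel (Kernel.map (mixK c1 c2 (fwd Q1 (k + 1) hk1)
            (fwd Q2 (k + 1) hk1))
            (splitF (k + 1))) :=
          Kernel.IsMarkovKernel.map _ (measurable_split (k + 1))
        conv_lhs => rw [fwd]
        have hp : (mixFamQ Q1 Q2 c1 c2 hc).q ⟨k + 1, by omega⟩ =
            Kernel.comap
              (Kernel.condKernel (Kernel.map
                (mixK c1 c2 (fwd Q1 (k + 1) hk1) (fwd Q2 (k + 1) hk1))
                (splitF (k + 1))))
              (fun t : (∀ j : Fin (k + 1), Y j) × (∀ j : Fin (k + 2), X j) => (t.2, t.1))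
              (measurable_snd.prodMk measurable_fst) := by
          show qmix Q1 Q2 c1 c2 hc ⟨k + 1, by omega⟩ = _
          rw [qmix]
          rw [dif_pos hne]
        rw [hp, comap_comap_swap,
          fwd_mixFamQ Q1 Q2 c1 c2 hc k (by omega)]
        have hfst : Kernel.comap (mixK c1 c2 (fwd Q1 k hk) (fwd Q2 k hk)) (restr (k + 1))
            (measurable_restr (k + 1)) =
            Kernel.fst (Kernel.map (mixK c1 c2 (fwd Q1 (k + 1) hk1) (fwd Q2 (k + 1) hk1))
              (splitF (k + 1))) := by
          rw [Kernel.fst_eq, kmap_map _ (measurable_split (k + 1)) measurable_fst]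
          have : Prod.fst ∘ (splitF (Z := Y) (k + 1)) = restr (k + 1) := rfl
          rw [this, map_mixK _ _ _ _ (measurable_restr (k + 1)),
            map_fwd_restr Q1 k hk1, map_fwd_restr Q2 k hk1, comap_mixK]
        rw [hfst, Kernel.disintegrate,
          kmap_map _ (measurable_split (k + 1)) (measurable_finSnoc (k + 1)),
          snoc_comp_split (k + 1), Kernel.map_id]
      · haveI : IsEmpty (Y (k + 1)) := not_nonempty_iff.mp hne
        haveI : IsEmpty (∀ j : Fin (k + 2), Y j) :=
          ⟨fun f => ‹IsEmpty (Y (k + 1))›.false (f (Fin.last (k + 1)))⟩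
        ext1 y
        exact Subsingleton.elim _ _

end ConvexMain

section Statements

variable {X Y : ℕ → Type*} {n : ℕ}
  [∀ i, TopologicalSpace (X i)] [∀ i, MeasurableSpace (X i)] [∀ i, BorelSpace (X i)]
  [∀ i, PolishSpace (X i)]
  [∀ i, TopologicalSpace (Y i)] [∀ i, MeasurableSpace (Y i)] [∀ i, BorelSpace (Y i)]
  [∀ i, PolishSpace (Y i)]

/-- The set of causally conditioned kernels arising from feedback
families and the set arising from forward families are both convex: any pointwise convex
combination of two causally conditioned kernels is again the causally conditioned kernel
of some family. -/
theorem convexity_of_causally_conditioned_kernels :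
    (∀ (P1 P2 : FeedbackFamily X Y n) (lam : ℝ), lam ∈ Set.Ioo (0 : ℝ) 1 →
      ∃ P : FeedbackFamily X Y n, ∀ y : ∀ j : Fin n, Y j,
        back P n le_rfl y =
          ENNReal.ofReal lam • back P1 n le_rfl y +
            ENNReal.ofReal (1 - lam) • back P2 n le_rfl y) ∧
    (∀ (Q1 Q2 : ForwardFamily X Y n) (lam : ℝ), lam ∈ Set.Ioo (0 : ℝ) 1 →
      ∃ Q : ForwardFamily X Y n, ∀ x : ∀ j : Fin (n + 1), X j,
        fwd Q n le_rfl x =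
          ENNReal.ofReal lam • fwd Q1 n le_rfl x +
            ENNReal.ofReal (1 - lam) • fwd Q2 n le_rfl x) := by
  constructor
  · intro P1 P2 lam hlam
    have hc : ENNReal.ofReal lam + ENNReal.ofReal (1 - lam) = 1 := by
      rw [← ENNReal.ofReal_add hlam.1.le (by linarith [hlam.2])]
      norm_num
    refine ⟨mixFam P1 P2 _ _ hc, fun y => ?_⟩
    rw [back_mixFam P1 P2 _ _ hc n le_rfl]
    rfl
  · intro Q1 Q2 lam hlam
    have hc : ENNReal.ofReal lam + ENNReal.ofReal (1 - lam) = 1 := by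
      rw [← ENNReal.ofReal_add hlam.1.le (by linarith [hlam.2])]
      norm_num
    refine ⟨mixFamQ Q1 Q2 _ _ hc, fun x => ?_⟩
    rw [fwd_mixFamQ Q1 Q2 _ _ hc n le_rfl]
    rfl


end Statements

end PaperDI
end

section
/- Assume each Y_i (0 ≤ i ≤ n) is a compact Polish space and each X_i is a Polish space, and let P = (p_i) be a feedback family satisfying condition (CA). Then the family of probability measures { ←P_{0,n}(· | y^{n-1}) : y^{n-1} ∈ Y_{0,n-1} } on X_{0,n} is uniformly tight; more precisely, for every ε > 0 there exist compact sets K_i ⊆ X_i (0 ≤ i ≤ n) such that ←P_{0,n}(K_0 × ⋯ × K_n | y^{n-1}) ≥ 1 − ε for every y^{n-1} ∈ Y_{0,n-1}. Consequently this family is relatively compact in the topology of weak convergence of probability measures. -/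
open MeasureTheory ProbabilityTheory Filter
open scoped ENNReal NNReal

namespace PaperDI

section AuxKeyLemmas

open Topology Metric

/-- One scale of the uniform tightness construction. -/
lemma exists_uniform_open_cover {T Z : Type*} [TopologicalSpace T]
    [MeasurableSpace Z] [TopologicalSpace Z] [PolishSpace Z] [BorelSpace Z]
    (μ : T → Measure Z) (hprob : ∀ t, IsProbabilityMeasure (μ t))
    (hc : ∀ g : BoundedContinuousFunction Z ℝ, Continuous fun t => ∫ z, g z ∂(μ t))
    {C : Set T} (hC : IsCompact C) {η : ℝ≥0∞} (hη0 : 0 < η)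
    (G : ℕ → Set Z) (hGo : ∀ N, IsOpen (G N)) (hGm : Monotone G)
    (hGu : (⋃ N, G N) = Set.univ) :
    ∃ N, ∀ t ∈ C, 1 - η < μ t (G N) := by
  letI := TopologicalSpace.upgradeIsCompletelyMetrizable Z
  have step : ∀ t0 : T, ∃ N, ∃ V : Set T, IsOpen V ∧ t0 ∈ V ∧
      ∀ t ∈ V, 1 - η < μ t (G N) := by
    intro t0
    have := hprob t0
    have h1 : Tendsto (fun N => μ t0 (G N)) atTop (𝓝 (μ t0 (⋃ N, G N))) :=
      tendsto_measure_iUnion_atTop hGm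
    rw [hGu, measure_univ] at h1
    have h2 : (1 : ℝ≥0∞) - η < 1 := ENNReal.sub_lt_self ENNReal.one_ne_top one_ne_zero hη0.ne'
    obtain ⟨N, hN⟩ := (h1.eventually (eventually_gt_nhds h2)).exists
    obtain ⟨F, hFG, hFc, hF⟩ := (hGo N).exists_lt_isClosed (μ := μ t0) hN
    obtain ⟨f, hf0, hf1, hf01⟩ := exists_continuous_zero_one_of_isClosed
      (hGo N).isClosed_compl hFc (disjoint_compl_left_iff.2 hFG)
    set g : BoundedContinuousFunction Z ℝ :=
      BoundedContinuousFunction.mkOfBound f 1 (by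
        intro x y
        rw [Real.dist_eq]
        have hx := hf01 x; have hy := hf01 y
        rw [abs_sub_le_iff]
        constructor <;> · simp only [Set.mem_Icc] at hx hy; linarith)
    have hgle : ∀ z, g z ≤ Set.indicator (G N) (fun _ => (1:ℝ)) z := by
      intro z
      by_cases hz : z ∈ G N
      · simp only [Set.indicator_of_mem hz]
        exact (hf01 z).2
      · simp only [Set.indicator_of_notMem hz]
        exact le_of_eq (hf0 hz)
    have hgge : ∀ z, Set.indicator F (fun _ => (1:ℝ)) z ≤ g z := by
      intro z
      by_cases hz : z ∈ F
      · simp only [Set.indicator_of_mem hz]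
        exact le_of_eq (hf1 hz).symm
      · simp only [Set.indicator_of_notMem hz]
        exact (hf01 z).1
    have hint : ∀ t, IsProbabilityMeasure (μ t) → ∫ z, g z ∂(μ t) ≤ (μ t (G N)).toReal := by
      intro t ht
      calc ∫ z, g z ∂(μ t) ≤ ∫ z, Set.indicator (G N) (fun _ => (1:ℝ)) z ∂(μ t) := by
            apply integral_mono (g.integrable (μ t))
            · exact (integrable_const (1:ℝ)).indicator (hGo N).measurableSet
            · exact hgle
        _ = (μ t (G N)).toReal := by
            rw [integral_indicator_const _ (hGo N).measurableSet]
            simp [measureReal_def]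
    have hintF : (μ t0 F).toReal ≤ ∫ z, g z ∂(μ t0) := by
      calc (μ t0 F).toReal = ∫ z, Set.indicator F (fun _ => (1:ℝ)) z ∂(μ t0) := by
            rw [integral_indicator_const _ hFc.measurableSet]; simp [measureReal_def]
        _ ≤ ∫ z, g z ∂(μ t0) := by
            apply integral_mono ((integrable_const (1:ℝ)).indicator hFc.measurableSet)
              (g.integrable (μ t0)) hgge
    refine ⟨N, {t | (1 - η).toReal < ∫ z, g z ∂(μ t)}, ?_, ?_, ?_⟩
    · exact isOpen_Ioi.preimage (hc g)
    · refine lt_of_lt_of_le ?_ hintF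
      rw [ENNReal.toReal_lt_toReal (by simp) (measure_ne_top _ _)]
      exact hF
    · intro t ht
      have := hprob t
      have h3 : (1 - η).toReal < (μ t (G N)).toReal := lt_of_lt_of_le ht (hint t (hprob t))
      rwa [ENNReal.toReal_lt_toReal (by simp) (measure_ne_top _ _)] at h3
  choose N V hVo hmem hV using step
  obtain ⟨s, hs⟩ := hC.elim_finite_subcover V hVo
    (fun t _ => Set.mem_iUnion.2 ⟨t, hmem t⟩)
  refine ⟨s.sup N, fun t ht => ?_⟩
  obtain ⟨i, hi, hti⟩ := Set.mem_iUnion₂.1 (hs ht)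
  exact lt_of_lt_of_le (hV i t hti) (measure_mono (hGm (Finset.le_sup hi)))

/-- A weakly continuous family of probability measures on a Polish space, indexed by a
compact set of parameters, is uniformly tight. -/
lemma uniformTight_of_feller {T Z : Type*} [TopologicalSpace T]
    [MeasurableSpace Z] [TopologicalSpace Z] [PolishSpace Z] [BorelSpace Z]
    (μ : T → Measure Z) (hprob : ∀ t, IsProbabilityMeasure (μ t))
    (hc : ∀ g : BoundedContinuousFunction Z ℝ, Continuous fun t => ∫ z, g z ∂(μ t))
    {C : Set T} (hC : IsCompact C) {ε : ℝ≥0∞} (hε : 0 < ε) :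
    ∃ K : Set Z, IsCompact K ∧ ∀ t ∈ C, μ t Kᶜ ≤ ε := by
  rcases isEmpty_or_nonempty Z with hZ | hZ
  · refine ⟨∅, isCompact_empty, fun t ht => ?_⟩
    have h1 : (μ t) Set.univ = 1 := (hprob t).measure_univ
    rw [Set.univ_eq_empty_iff.mpr hZ, measure_empty] at h1
    exact absurd h1.symm one_ne_zero
  suffices h : ∃ K : Set Z, IsCompact K ∧ ∀ t ∈ C, μ t Kᶜ ≤ min ε 1 by
    obtain ⟨K, hK, hKb⟩ := h
    exact ⟨K, hK, fun t ht => (hKb t ht).trans (min_le_left _ _)⟩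
  set ε' : ℝ≥0∞ := min ε 1 with hε'
  have hε'0 : 0 < ε' := lt_min hε zero_lt_one
  have hε'1 : ε' ≤ 1 := min_le_right _ _
  letI := TopologicalSpace.upgradeIsCompletelyMetrizable Z
  obtain ⟨u, hu⟩ := TopologicalSpace.exists_dense_seq Z
  set G : ℕ → ℕ → Set Z := fun m N => ⋃ j ∈ Finset.range (N + 1), ball (u j) (1 / (m + 1) : ℝ)
    with hG
  have hGo : ∀ m N, IsOpen (G m N) := fun m N => isOpen_biUnion fun j _ => isOpen_ball
  have hGm : ∀ m, Monotone (G m) := by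
    intro m N1 N2 h
    intro z hz
    obtain ⟨j, hj, hzj⟩ := Set.mem_iUnion₂.1 hz
    exact Set.mem_biUnion (Finset.mem_range.2 (by have := Finset.mem_range.1 hj; omega)) hzj
  have hGu : ∀ m, (⋃ N, G m N) = Set.univ := by
    intro m
    apply Set.eq_univ_of_forall
    intro z
    have hpos : (0:ℝ) < 1 / (m + 1) := by positivity
    obtain ⟨j, hj⟩ := hu.exists_dist_lt z hpos
    refine Set.mem_iUnion.2 ⟨j, ?_⟩
    refine Set.mem_biUnion (Finset.self_mem_range_succ j) ?_
    exact mem_ball.2 hj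
  set η : ℕ → ℝ≥0∞ := fun m => ε' * 2⁻¹ ^ (m + 1) with hη
  have hη0 : ∀ m, 0 < η m := by
    intro m
    exact ENNReal.mul_pos hε'0.ne' (pow_ne_zero _ (by norm_num))
  choose Nm hNm using fun m =>
    exists_uniform_open_cover μ hprob hc hC (hη0 m) (G m) (hGo m) (hGm m) (hGu m)
  refine ⟨⋂ m, closure (G m (Nm m)), ?_, ?_⟩
  · apply TotallyBounded.isCompact_of_isClosed
    · rw [Metric.totallyBounded_iff]
      intro δ hδ
      obtain ⟨m, hm⟩ := exists_nat_one_div_lt (half_pos hδ)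
      refine ⟨u '' (Finset.range (Nm m + 1) : Finset ℕ),
        (Set.Finite.image _ (Finset.finite_toSet _)), ?_⟩
      have h1 : closure (G m (Nm m)) ⊆
          ⋃ j ∈ Finset.range (Nm m + 1), closedBall (u j) (1 / (m + 1) : ℝ) := by
        apply closure_minimal
        · exact Set.iUnion₂_mono fun j hj => ball_subset_closedBall
        · exact (Finset.range (Nm m + 1)).finite_toSet.isClosed_biUnion
            fun j _ => isClosed_closedBall
      refine (Set.iInter_subset _ m).trans (h1.trans ?_)
      intro z hz
      obtain ⟨j, hj, hzj⟩ := Set.mem_iUnion₂.1 hz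
      refine Set.mem_iUnion₂.2 ⟨u j, Set.mem_image_of_mem u hj, ?_⟩
      exact closedBall_subset_ball (by linarith [hm]) hzj
    · exact isClosed_iInter fun m => isClosed_closure
  · intro t ht
    have := hprob t
    have hcompl : (⋂ m, closure (G m (Nm m)))ᶜ = ⋃ m, (closure (G m (Nm m)))ᶜ := by
      simp [Set.compl_iInter]
    rw [hcompl]
    calc μ t (⋃ m, (closure (G m (Nm m)))ᶜ) ≤ ∑' m, μ t (closure (G m (Nm m)))ᶜ :=
          measure_iUnion_le _
      _ ≤ ∑' m, η m := by
          apply ENNReal.tsum_le_tsum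
          intro m
          have h1 : 1 - η m < μ t (G m (Nm m)) := hNm m t ht
          have h2 : μ t (G m (Nm m))ᶜ ≤ η m := by
            rw [prob_compl_eq_one_sub (hGo m (Nm m)).measurableSet]
            calc 1 - μ t (G m (Nm m)) ≤ 1 - (1 - η m) := tsub_le_tsub_left h1.le _
              _ ≤ η m := by
                  rw [tsub_le_iff_right]
                  exact le_add_tsub
          exact le_trans (measure_mono (Set.compl_subset_compl.2 subset_closure)) h2
      _ = ε' := by
          rw [hη, ENNReal.tsum_mul_left]
          have h3 : ∑' m : ℕ, (2⁻¹ : ℝ≥0∞) ^ (m + 1) = 1 := by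
            simp_rw [pow_succ]
            rw [ENNReal.tsum_mul_right, ENNReal.tsum_geometric, ENNReal.one_sub_inv_two]
            exact ENNReal.inv_mul_cancel (by norm_num) (by norm_num)
          rw [h3, mul_one]

/-- A Feller family of probability measures integrates jointly continuous bounded
functions continuously. -/
lemma continuous_integral_feller {B Z : Type*} [TopologicalSpace B]
    [TopologicalSpace.PseudoMetrizableSpace B]
    [MeasurableSpace Z] [TopologicalSpace Z] [PolishSpace Z] [BorelSpace Z]
    (μ : B → Measure Z) (hprob : ∀ t, IsProbabilityMeasure (μ t))
    (hc : ∀ g : BoundedContinuousFunction Z ℝ, Continuous fun t => ∫ z, g z ∂(μ t))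
    (f : BoundedContinuousFunction (B × Z) ℝ) :
    Continuous fun b => ∫ z, f (b, z) ∂(μ b) := by
  letI : PseudoMetricSpace B := TopologicalSpace.pseudoMetrizableSpacePseudoMetric B
  apply SeqContinuous.continuous
  intro u b hu
  have hint : ∀ (t t' : B), Integrable (fun z => f (t, z)) (μ t') := fun t t' => by
    have := hprob t'
    exact (f.compContinuous ⟨fun z => (t, z), by fun_prop⟩).integrable (μ t')
  set M : ℝ := ‖f‖ with hM
  have hM0 : 0 ≤ M := norm_nonneg f
  have hfM : ∀ p : B × Z, |f p| ≤ M := fun p => f.norm_coe_le_norm p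
  rw [Metric.tendsto_atTop]
  intro ε hε
  have hCc : IsCompact (insert b (Set.range u)) := hu.isCompact_insert_range
  have hεE : (0:ℝ≥0∞) < ENNReal.ofReal (ε / (8 * (M + 1))) := by
    rw [ENNReal.ofReal_pos]; positivity
  obtain ⟨K, hK, hKb⟩ := uniformTight_of_feller μ hprob hc hCc hεE
  letI := TopologicalSpace.upgradeIsCompletelyMetrizable Z
  have hKm : MeasurableSet Kᶜ := hK.isClosed.measurableSet.compl
  have hUC : ∀ᶠ t in 𝓝 b, ∀ z ∈ K, |f (t, z) - f (b, z)| < ε / 8 := by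
    apply hK.eventually_forall_of_forall_eventually
    intro z hz
    have hopen : IsOpen {p : B × Z | |f p - f (b, p.2)| < ε / 8} := by
      have hcont : Continuous fun p : B × Z => |f p - f (b, p.2)| := by
        apply Continuous.abs
        exact (map_continuous f).sub ((map_continuous f).comp (by fun_prop))
      exact isOpen_lt hcont continuous_const
    refine hopen.mem_nhds ?_
    simp [hε]
  have hUCn : ∀ᶠ n in atTop, ∀ z ∈ K, |f (u n, z) - f (b, z)| < ε / 8 := hu.eventually hUC
  have h2 : Tendsto (fun n => ∫ z, f (b, z) ∂(μ (u n))) atTop (𝓝 (∫ z, f (b, z) ∂(μ b))) := by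
    have := ((hc (f.compContinuous ⟨fun z => (b, z), by fun_prop⟩)).tendsto b).comp hu
    exact this
  have h2n : ∀ᶠ n in atTop,
      dist (∫ z, f (b, z) ∂(μ (u n))) (∫ z, f (b, z) ∂(μ b)) < ε / 2 :=
    h2 (Metric.ball_mem_nhds _ (by positivity))
  obtain ⟨N, hN⟩ := (hUCn.and h2n).exists_forall_of_atTop
  refine ⟨N, fun n hn => ?_⟩
  obtain ⟨hn1, hn2⟩ := hN n hn
  have hprobn := hprob (u n)
  have hA : |∫ z, f (u n, z) ∂(μ (u n)) - ∫ z, f (b, z) ∂(μ (u n))| ≤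
      ε / 8 + 2 * M * (μ (u n) Kᶜ).toReal := by
    rw [← integral_sub (hint (u n) (u n)) (hint b (u n))]
    calc |∫ z, (f (u n, z) - f (b, z)) ∂(μ (u n))|
        ≤ ∫ z, |f (u n, z) - f (b, z)| ∂(μ (u n)) := by
          simpa [Real.norm_eq_abs] using
            norm_integral_le_integral_norm (μ := μ (u n)) (fun z => f (u n, z) - f (b, z))
      _ ≤ ∫ z, (ε / 8 + Set.indicator Kᶜ (fun _ => 2 * M) z) ∂(μ (u n)) := by
          apply integral_mono ((hint (u n) (u n)).sub (hint b (u n))).abs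
          · exact (integrable_const _).add ((integrable_const _).indicator hKm)
          · intro z
            simp only [Pi.sub_apply]
            by_cases hz : z ∈ K
            · have := (hn1 z hz).le
              simp only [Set.indicator_of_notMem (Set.notMem_compl_iff.2 hz), add_zero]
              exact this
            · simp only [Set.indicator_of_mem (Set.mem_compl hz)]
              have h3 : |f (u n, z) - f (b, z)| ≤ 2 * M := by
                calc |f (u n, z) - f (b, z)| ≤ |f (u n, z)| + |f (b, z)| := abs_sub _ _
                  _ ≤ M + M := add_le_add (hfM _) (hfM _)
                  _ = 2 * M := by ring
              have h4 : (0:ℝ) ≤ ε / 8 := by positivity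
              linarith
      _ = ε / 8 + 2 * M * (μ (u n) Kᶜ).toReal := by
          rw [integral_add (integrable_const _) ((integrable_const _).indicator hKm),
            integral_const, integral_indicator_const _ hKm]
          simp [measure_univ, mul_comm, measureReal_def]
  have hKsmall : (μ (u n) Kᶜ).toReal ≤ ε / (8 * (M + 1)) := by
    have := hKb (u n) (Set.mem_insert_of_mem _ (Set.mem_range_self n))
    calc (μ (u n) Kᶜ).toReal ≤ (ENNReal.ofReal (ε / (8 * (M + 1)))).toReal :=
          ENNReal.toReal_mono ENNReal.ofReal_ne_top this
      _ = ε / (8 * (M + 1)) := ENNReal.toReal_ofReal (by positivity)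
  have hA2 : |∫ z, f (u n, z) ∂(μ (u n)) - ∫ z, f (b, z) ∂(μ (u n))| ≤ ε / 8 + ε / 4 := by
    refine hA.trans (add_le_add_right ?_ _)
    calc 2 * M * (μ (u n) Kᶜ).toReal ≤ 2 * M * (ε / (8 * (M + 1))) := by
          apply mul_le_mul_of_nonneg_left hKsmall (by positivity)
      _ ≤ ε / 4 := by
          have h8 : M + 1 ≠ 0 := by positivity
          have h5 : 2 * M * (ε / (8 * (M + 1))) = ε / 4 * (M / (M + 1)) := by
            field_simp; ring
          have hM1 : M / (M + 1) ≤ 1 := by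
            rw [div_le_one (by linarith)]; linarith
          rw [h5]
          calc ε / 4 * (M / (M + 1)) ≤ ε / 4 * 1 :=
                mul_le_mul_of_nonneg_left hM1 (by positivity)
            _ = ε / 4 := mul_one _
  calc dist (∫ z, f (u n, z) ∂(μ (u n))) (∫ z, f (b, z) ∂(μ b))
      ≤ dist (∫ z, f (u n, z) ∂(μ (u n))) (∫ z, f (b, z) ∂(μ (u n))) +
        dist (∫ z, f (b, z) ∂(μ (u n))) (∫ z, f (b, z) ∂(μ b)) := dist_triangle _ _ _
    _ < (ε / 8 + ε / 4) + ε / 2 := by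
        apply add_lt_add_of_le_of_lt _ hn2
        rw [Real.dist_eq]
        exact hA2
    _ ≤ ε := by linarith

lemma one_sub_add_le_mul (a b : ℝ≥0∞) : 1 - (a + b) ≤ (1 - a) * (1 - b) := by
  rw [tsub_le_iff_right]
  calc (1:ℝ≥0∞) ≤ (1 - b) + b := le_tsub_add
    _ ≤ ((1 - a) + a) * (1 - b) + b := by
        refine add_le_add_left ?_ b
        calc (1:ℝ≥0∞) - b = 1 * (1 - b) := (one_mul _).symm
          _ ≤ ((1 - a) + a) * (1 - b) := mul_le_mul_left le_tsub_add _
    _ = (1 - a) * (1 - b) + a * (1 - b) + b := by rw [add_mul]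
    _ ≤ (1 - a) * (1 - b) + a * 1 + b := by
        exact add_le_add_left (add_le_add_right (mul_le_mul_right tsub_le_self a) _) b
    _ = (1 - a) * (1 - b) + (a + b) := by rw [mul_one, add_assoc]

lemma prob_compl_le {Z : Type*} [MeasurableSpace Z] (μ : Measure Z)
    [IsProbabilityMeasure μ] {K : Set Z} (hK : MeasurableSet K) {ε : ℝ≥0∞}
    (h : μ Kᶜ ≤ ε) : 1 - ε ≤ μ K := by
  rw [tsub_le_iff_right]
  calc (1:ℝ≥0∞) = μ K + μ Kᶜ := by rw [measure_add_measure_compl hK, measure_univ]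
    _ ≤ μ K + ε := add_le_add_right h _

lemma continuous_finSnoc {Z : ℕ → Type*} [∀ i, TopologicalSpace (Z i)] (k : ℕ) :
    Continuous (fun p : (∀ j : Fin k, Z j) × Z k =>
      (Fin.snoc p.1 p.2 : ∀ j : Fin (k + 1), Z j)) := by
  apply continuous_pi
  intro j
  induction j using Fin.lastCases with
  | last => simpa using continuous_snd
  | cast i =>
    simp only [Fin.snoc_castSucc]
    exact (continuous_apply i).comp continuous_fst

lemma continuous_restr {Z : ℕ → Type*} [∀ i, TopologicalSpace (Z i)] (k : ℕ) :
    Continuous (restr (Z := Z) k) :=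
  continuous_pi fun _ => continuous_apply _

end AuxKeyLemmas

variable (X Y : ℕ → Type*) [∀ i, MeasurableSpace (X i)] [∀ i, MeasurableSpace (Y i)]

variable {X Y} {n : ℕ}

lemma back_markov (P : FeedbackFamily X Y n) :
    ∀ (k : ℕ) (hk : k ≤ n), IsMarkovKernel (back P k hk) := by
  intro k
  induction k with
  | zero =>
    intro hk
    rw [back]
    haveI := P.markov ⟨0, Nat.succ_pos n⟩
    exact Kernel.IsMarkovKernel.map _
      ((measurable_finSnoc 0).comp (measurable_const.prodMk measurable_id))
  | succ k ih =>
    intro hk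
    rw [back]
    haveI := ih (by omega)
    haveI := P.markov ⟨k + 1, by omega⟩
    exact Kernel.IsMarkovKernel.map _ (measurable_finSnoc (k + 1))

section Statements

variable {X Y : ℕ → Type*} {n : ℕ}
  [∀ i, TopologicalSpace (X i)] [∀ i, MeasurableSpace (X i)] [∀ i, BorelSpace (X i)]
  [∀ i, PolishSpace (X i)]
  [∀ i, TopologicalSpace (Y i)] [∀ i, MeasurableSpace (Y i)] [∀ i, BorelSpace (Y i)]
  [∀ i, PolishSpace (Y i)]


lemma back_feller (P : FeedbackFamily X Y n) (hCA : CondCA P) :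
    ∀ (k : ℕ) (hk : k ≤ n) (g : BoundedContinuousFunction (∀ j : Fin (k + 1), X j) ℝ),
      Continuous fun w : ∀ j : Fin k, Y j => ∫ x, g x ∂(back P k hk w) := by
  intro k
  induction k with
  | zero =>
    intro hk g
    have hm0 : Measurable (fun x0 : X 0 => (Fin.snoc default x0 : ∀ j : Fin 1, X j)) :=
      (measurable_finSnoc 0).comp (measurable_const.prodMk measurable_id)
    have h0 : ∀ w : ∀ j : Fin 0, Y j, back P 0 hk w =
        ((P.p ⟨0, Nat.succ_pos n⟩) default).map
          (fun x0 => (Fin.snoc default x0 : ∀ j : Fin 1, X j)) := by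
      intro w
      rw [back, Kernel.map_apply _ hm0, Kernel.comap_apply]
      rfl
    simp only [h0]
    exact continuous_const
  | succ k ih =>
    intro hk g
    haveI := P.markov ⟨k + 1, by omega⟩
    haveI : IsMarkovKernel (back P k (by omega : k ≤ n)) := back_markov P k (by omega)
    -- the inner integral, as a bounded continuous function
    have hsn : Continuous (fun t : (∀ j : Fin (k + 1), X j) × X (k + 1) =>
        (Fin.snoc t.1 t.2 : ∀ j : Fin (k + 2), X j)) := continuous_finSnoc (k + 1)
    set f1 : BoundedContinuousFunction
        (((∀ j : Fin (k + 1), X j) × (∀ j : Fin (k + 1), Y j)) × X (k + 1)) ℝ :=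
      g.compContinuous ⟨fun t => (Fin.snoc t.1.1 t.2 : ∀ j : Fin (k + 2), X j), by
        exact hsn.comp ((continuous_fst.comp continuous_fst).prodMk continuous_snd)⟩ with hf1
    have hH : Continuous fun s : (∀ j : Fin (k + 1), X j) × (∀ j : Fin (k + 1), Y j) =>
        ∫ a, g (Fin.snoc s.1 a) ∂(P.p ⟨k + 1, by omega⟩ s) := by
      have := continuous_integral_feller (fun s => P.p ⟨k + 1, by omega⟩ s)
        (fun s => (P.markov ⟨k + 1, by omega⟩).isProbabilityMeasure s)
        (fun g' => hCA ⟨k + 1, by omega⟩ g') f1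
      exact this
    have hbd : ∀ t : (∀ j : Fin (k + 1), Y j) × (∀ j : Fin (k + 1), X j),
        ‖∫ a, g (Fin.snoc t.2 a) ∂(P.p ⟨k + 1, by omega⟩ (t.2, t.1))‖ ≤ ‖g‖ := by
      intro t
      have h1 := norm_integral_le_of_norm_le_const
        (μ := P.p ⟨k + 1, by omega⟩ (t.2, t.1)) (C := ‖g‖)
        (f := fun a => g (Fin.snoc t.2 a))
        (Filter.Eventually.of_forall fun a => g.norm_coe_le_norm _)
      simpa [measure_univ] using h1
    set f2 : BoundedContinuousFunction
        ((∀ j : Fin (k + 1), Y j) × (∀ j : Fin (k + 1), X j)) ℝ :=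
      BoundedContinuousFunction.ofNormedAddCommGroup
        (fun t => ∫ a, g (Fin.snoc t.2 a) ∂(P.p ⟨k + 1, by omega⟩ (t.2, t.1)))
        (hH.comp (continuous_snd.prodMk continuous_fst)) ‖g‖ hbd with hf2
    -- outer continuity
    have hout : Continuous fun w : ∀ j : Fin (k + 1), Y j =>
        ∫ x, f2 (w, x) ∂(back P k (by omega : k ≤ n) (restr k w)) := by
      apply continuous_integral_feller
        (fun w : ∀ j : Fin (k + 1), Y j => back P k (by omega : k ≤ n) (restr k w))
        (fun w => (back_markov P k (by omega)).isProbabilityMeasure _)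
      intro g'
      exact (ih (by omega) g').comp (continuous_restr k)
    apply hout.congr
    intro w
    -- identify the two integrals
    haveI : IsMarkovKernel ((back P k (by omega : k ≤ n)).comap
        (restr k) (measurable_restr k)) := by infer_instance
    rw [back, Kernel.map_apply _ (measurable_finSnoc (k + 1)),
      integral_map (measurable_finSnoc (k + 1)).aemeasurable
        (g.continuous.aestronglyMeasurable),
      ProbabilityTheory.integral_compProd (by
        exact (g.compContinuous ⟨fun t : (∀ j : Fin (k + 1), X j) × X (k + 1) =>
          (Fin.snoc t.1 t.2 : ∀ j : Fin (k + 2), X j), hsn⟩).integrable _)]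
    simp only [Kernel.comap_apply, hf2, BoundedContinuousFunction.coe_ofNormedAddCommGroup]

lemma back_tight [∀ i, CompactSpace (Y i)] (P : FeedbackFamily X Y n) (hCA : CondCA P) :
    ∀ (k : ℕ) (hk : k ≤ n) (ε : ℝ≥0∞), 0 < ε →
      ∃ K : ∀ i : Fin (k + 1), Set (X i), (∀ i, IsCompact (K i)) ∧
        ∀ y : ∀ j : Fin k, Y j, 1 - ε ≤ back P k hk y {x | ∀ i, x i ∈ K i} := by
  intro k
  induction k with
  | zero =>
    intro hk ε hε
    haveI := P.markov ⟨0, Nat.succ_pos n⟩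
    obtain ⟨K0, hK0, hK0b⟩ := uniformTight_of_feller
      (fun t => P.p ⟨0, Nat.succ_pos n⟩ t)
      (fun t => (P.markov ⟨0, Nat.succ_pos n⟩).isProbabilityMeasure t)
      (fun g' => hCA ⟨0, Nat.succ_pos n⟩ g')
      (isCompact_singleton
        (x := (default : (∀ j : Fin 0, X j) × (∀ j : Fin 0, Y j)))) hε
    set K0' : ∀ i : Fin 1, Set (X i.1) :=
      Fin.cons (α := fun i : Fin 1 => Set (X i.1)) K0 (fun j => j.elim0) with hK0'
    have hK0'c : ∀ i, IsCompact (K0' i) := by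
      intro i
      have hi : i = 0 := Subsingleton.elim i 0
      subst hi
      simpa [hK0'] using hK0
    have hK0'm : ∀ i, MeasurableSet (K0' i) := fun i => (hK0'c i).isClosed.measurableSet
    refine ⟨K0', hK0'c, ?_⟩
    intro y
    have hm0 : Measurable (fun x0 : X 0 => (Fin.snoc default x0 : ∀ j : Fin 1, X j)) :=
      (measurable_finSnoc 0).comp (measurable_const.prodMk measurable_id)
    have hS : MeasurableSet {x : ∀ j : Fin 1, X j | ∀ i, x i ∈ K0' i} := by
      have h : {x : ∀ j : Fin 1, X j | ∀ i, x i ∈ K0' i} = Set.univ.pi K0' := by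
        ext x; simp [Set.mem_pi]
      rw [h]
      exact MeasurableSet.univ_pi hK0'm
    rw [back, Kernel.map_apply _ hm0, Kernel.comap_apply, Measure.map_apply hm0 hS]
    have hsub : K0 ⊆ (fun x0 : X 0 => (Fin.snoc default x0 : ∀ j : Fin 1, X j)) ⁻¹'
        {x : ∀ j : Fin 1, X j | ∀ i, x i ∈ K0' i} := by
      intro x0 hx0 i
      have hi : i = 0 := Subsingleton.elim i 0
      subst hi
      simpa [hK0', Fin.snoc] using hx0
    refine le_trans ?_ (measure_mono hsub)
    exact prob_compl_le _ hK0.isClosed.measurableSet (hK0b _ rfl)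
  | succ k ih =>
    intro hk ε hε
    have hε2 : (0:ℝ≥0∞) < ε / 2 := ENNReal.div_pos hε.ne' (by norm_num)
    obtain ⟨K, hKc, hKb⟩ := ih (by omega) (ε / 2) hε2
    haveI := P.markov ⟨k + 1, by omega⟩
    haveI : IsMarkovKernel (back P k (by omega : k ≤ n)) := back_markov P k (by omega)
    -- tightness of the next kernel over the compact rectangle
    have hA : IsCompact ({x : ∀ j : Fin (k + 1), X j | ∀ i, x i ∈ K i} ×ˢ
        (Set.univ : Set (∀ j : Fin (k + 1), Y j))) := by
      apply IsCompact.prod _ isCompact_univ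
      have : {x : ∀ j : Fin (k + 1), X j | ∀ i, x i ∈ K i} = Set.univ.pi K := by
        ext x; simp [Set.mem_pi]
      rw [this]
      exact isCompact_univ_pi hKc
    obtain ⟨K1, hK1, hK1b⟩ := uniformTight_of_feller
      (fun t => P.p ⟨k + 1, by omega⟩ t)
      (fun t => (P.markov ⟨k + 1, by omega⟩).isProbabilityMeasure t)
      (fun g' => hCA ⟨k + 1, by omega⟩ g') hA hε2
    set K' : ∀ i : Fin (k + 2), Set (X i) :=
      fun i => Fin.lastCases (motive := fun i => Set (X i)) K1 (fun j => K j) i with hK'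
    have hK'c : ∀ i, IsCompact (K' i) := by
      intro i
      induction i using Fin.lastCases with
      | last => simpa [hK'] using hK1
      | cast j => simpa [hK'] using hKc j
    have hK'm : ∀ i, MeasurableSet (K' i) := fun i => (hK'c i).isClosed.measurableSet
    refine ⟨K', hK'c, ?_⟩
    intro y
    have hSm : MeasurableSet {x : ∀ j : Fin (k + 2), X j | ∀ i, x i ∈ K' i} := by
      have : {x : ∀ j : Fin (k + 2), X j | ∀ i, x i ∈ K' i} = Set.univ.pi K' := by
        ext x; simp [Set.mem_pi]
      rw [this]
      exact MeasurableSet.univ_pi hK'm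
    have hAm : MeasurableSet {x : ∀ j : Fin (k + 1), X j | ∀ i, x i ∈ K i} := by
      have : {x : ∀ j : Fin (k + 1), X j | ∀ i, x i ∈ K i} = Set.univ.pi K := by
        ext x; simp [Set.mem_pi]
      rw [this]
      exact MeasurableSet.univ_pi fun i => (hKc i).isClosed.measurableSet
    rw [back, Kernel.map_apply _ (measurable_finSnoc (k + 1)),
      Measure.map_apply (measurable_finSnoc (k + 1)) hSm]
    have hpre : (fun t : (∀ j : Fin (k + 1), X j) × X (k + 1) =>
          (Fin.snoc t.1 t.2 : ∀ j : Fin (k + 2), X j)) ⁻¹'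
          {x : ∀ j : Fin (k + 2), X j | ∀ i, x i ∈ K' i} =
        {x : ∀ j : Fin (k + 1), X j | ∀ i, x i ∈ K i} ×ˢ K1 := by
      ext t
      simp only [Set.mem_preimage, Set.mem_setOf_eq, Set.mem_prod]
      constructor
      · intro h
        refine ⟨fun i => ?_, ?_⟩
        · have := h i.castSucc
          simpa [hK', Fin.snoc_castSucc] using this
        · have := h (Fin.last (k + 1))
          simpa [hK', Fin.snoc_last] using this
      · rintro ⟨h1, h2⟩ i
        induction i using Fin.lastCases with
        | last => simpa [hK', Fin.snoc_last] using h2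
        | cast j => simpa [hK', Fin.snoc_castSucc] using h1 j
    rw [hpre]
    rw [Kernel.compProd_apply (hAm.prod hK1.isClosed.measurableSet)]
    have hlow : ∀ x : ∀ j : Fin (k + 1), X j,
        Set.indicator {x : ∀ j : Fin (k + 1), X j | ∀ i, x i ∈ K i}
          (fun _ => 1 - ε / 2) x ≤
        ((P.p ⟨k + 1, Nat.lt_succ_of_le hk⟩).comap
          (fun t : (∀ j : Fin (k + 1), Y j) × (∀ j : Fin (k + 1), X j) => (t.2, t.1))
          (measurable_snd.prodMk measurable_fst)) (y, x)
          {c | (x, c) ∈ {x : ∀ j : Fin (k + 1), X j | ∀ i, x i ∈ K i} ×ˢ K1} := by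
      intro x
      by_cases hx : x ∈ {x : ∀ j : Fin (k + 1), X j | ∀ i, x i ∈ K i}
      · rw [Set.indicator_of_mem hx]
        have h1 : {c | (x, c) ∈ {x : ∀ j : Fin (k + 1), X j | ∀ i, x i ∈ K i} ×ˢ K1} = K1 := by
          ext c; simp [hx]
        rw [h1, Kernel.comap_apply]
        exact prob_compl_le _ hK1.isClosed.measurableSet
          (hK1b (x, y) (Set.mk_mem_prod hx (Set.mem_univ y)))
      · rw [Set.indicator_of_notMem hx]
        exact zero_le
    calc (1:ℝ≥0∞) - ε ≤ (1 - ε / 2) * (1 - ε / 2) := by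
          have h1 : ε / 2 + ε / 2 = ε := ENNReal.add_halves ε
          calc (1:ℝ≥0∞) - ε = 1 - (ε / 2 + ε / 2) := by rw [h1]
            _ ≤ (1 - ε / 2) * (1 - ε / 2) := one_sub_add_le_mul _ _
      _ ≤ (1 - ε / 2) * (((back P k (by omega : k ≤ n)).comap (restr k)
            (measurable_restr k)) y {x | ∀ i, x i ∈ K i}) := by
          apply mul_le_mul_right
          rw [Kernel.comap_apply]
          exact hKb (restr k y)
      _ = ∫⁻ x, Set.indicator {x : ∀ j : Fin (k + 1), X j | ∀ i, x i ∈ K i}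
            (fun _ => 1 - ε / 2) x
            ∂(((back P k (by omega : k ≤ n)).comap (restr k)
              (measurable_restr k)) y) := by
          rw [lintegral_indicator_const hAm]
      _ ≤ _ := lintegral_mono hlow

/-- If the `Y_i` are compact Polish, the `X_i` Polish, and the feedback
family `P` satisfies (CA), the family `{←P_{0,n}(· | y^{n-1}) : y^{n-1}}` is uniformly
tight (with compact rectangles), and hence relatively compact for weak convergence. -/
theorem back_kernel_family_uniformly_tight [∀ i, CompactSpace (Y i)]
    (P : FeedbackFamily X Y n) (hCA : CondCA P) :
    (∀ ε : ℝ≥0∞, 0 < ε → ∃ K : ∀ i : Fin (n + 1), Set (X i),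
      (∀ i, IsCompact (K i)) ∧
        ∀ y : ∀ j : Fin n, Y j, 1 - ε ≤ back P n le_rfl y {x | ∀ i, x i ∈ K i}) ∧
    UniformlyTight {μ : Measure (∀ j : Fin (n + 1), X j) |
        ∃ y : ∀ j : Fin n, Y j, μ = back P n le_rfl y} ∧
    ∀ y : ℕ → ∀ j : Fin n, Y j,
      ∃ (φ : ℕ → ℕ) (μ0 : Measure (∀ j : Fin (n + 1), X j)),
        StrictMono φ ∧ IsProbabilityMeasure μ0 ∧
          WeakTendsto (fun k => back P n le_rfl (y (φ k))) μ0 := by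
  have h1 : ∀ ε : ℝ≥0∞, 0 < ε → ∃ K : ∀ i : Fin (n + 1), Set (X i),
      (∀ i, IsCompact (K i)) ∧
        ∀ y : ∀ j : Fin n, Y j, 1 - ε ≤ back P n le_rfl y {x | ∀ i, x i ∈ K i} :=
    fun ε hε => back_tight P hCA n le_rfl ε hε
  refine ⟨h1, ?_, ?_⟩
  · intro ε hε
    obtain ⟨K, hKc, hKb⟩ := h1 ε hε
    refine ⟨{x | ∀ i, x i ∈ K i}, ?_, ?_⟩
    · have h2 : {x : ∀ j : Fin (n + 1), X j | ∀ i, x i ∈ K i} = Set.univ.pi K := by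
        ext x; simp [Set.mem_pi]
      rw [h2]; exact isCompact_univ_pi hKc
    · rintro μ ⟨y, rfl⟩
      exact hKb y
  · intro y
    letI := TopologicalSpace.upgradeIsCompletelyMetrizable (∀ j : Fin n, Y j)
    obtain ⟨y0, -, φ, hφ, hconv⟩ :=
      isCompact_univ.tendsto_subseq (fun k => Set.mem_univ (y k))
    haveI hmk : IsMarkovKernel (back P n le_rfl) := back_markov P n le_rfl
    refine ⟨φ, back P n le_rfl y0, hφ, hmk.isProbabilityMeasure y0, ?_⟩
    intro f
    have hcont := back_feller P hCA n le_rfl f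
    exact (hcont.tendsto y0).comp hconv

end Statements

end PaperDI
end

section
/- Let Y and X be Polish spaces and let κ be a Markov kernel from Y to X that is weakly (Feller) continuous, i.e., for every bounded continuous g : X → ℝ the map y ↦ ∫_X g(x) κ(y)(dx) is continuous on Y. If ν_α (α = 1,2,…) and ν₀ are Borel probability measures on Y such that ν_α → ν₀ weakly, then the composition–product measures ν_α ⊗ κ on Y × X, defined by (ν_α ⊗ κ)(B × A) = ∫_B κ(y)(A) ν_α(dy) for Borel sets B ⊆ Y and A ⊆ X, converge weakly to ν₀ ⊗ κ. -/
open MeasureTheory ProbabilityTheory Filter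
open scoped ENNReal NNReal

namespace PaperDI

variable (X Y : ℕ → Type*) [∀ i, MeasurableSpace (X i)] [∀ i, MeasurableSpace (Y i)]

variable {X Y} {n : ℕ}

section Statements

variable {X Y : ℕ → Type*} {n : ℕ}
  [∀ i, TopologicalSpace (X i)] [∀ i, MeasurableSpace (X i)] [∀ i, BorelSpace (X i)]
  [∀ i, PolishSpace (X i)]
  [∀ i, TopologicalSpace (Y i)] [∀ i, MeasurableSpace (Y i)] [∀ i, BorelSpace (Y i)]
  [∀ i, PolishSpace (Y i)]

open scoped Topology

/-- Ulam tightness for a complete second-countable metric space. -/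
lemma exists_isCompact_measure_compl_lt_aux {𝒳 : Type*} [MetricSpace 𝒳] [CompleteSpace 𝒳]
    [SecondCountableTopology 𝒳] [MeasurableSpace 𝒳] [OpensMeasurableSpace 𝒳]
    (μ : Measure 𝒳) [IsFiniteMeasure μ] {ε : ℝ≥0∞} (hε : ε ≠ 0) :
    ∃ K : Set 𝒳, IsCompact K ∧ μ Kᶜ < ε := by
  rcases eq_or_ne (μ Set.univ) 0 with hμ0 | hμ0
  · refine ⟨∅, isCompact_empty, ?_⟩
    have h0 : μ (∅ : Set 𝒳)ᶜ = 0 :=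
      le_antisymm (hμ0 ▸ measure_mono (Set.subset_univ _)) (zero_le)
    rw [h0]
    exact hε.bot_lt
  rcases isEmpty_or_nonempty 𝒳 with h𝒳 | h𝒳
  · refine ⟨∅, isCompact_empty, ?_⟩
    have h0 : μ (∅ : Set 𝒳)ᶜ = 0 := by
      rw [Set.eq_empty_of_isEmpty ((∅ : Set 𝒳)ᶜ)]; simp
    rw [h0]; exact hε.bot_lt
  obtain ⟨u, hu⟩ := TopologicalSpace.exists_dense_seq 𝒳
  obtain ⟨δ, hδpos, hδsum⟩ := ENNReal.exists_pos_sum_of_countable hε ℕ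
  set S : ℕ → ℕ → Set 𝒳 :=
    fun m n => ⋃ i ∈ Set.Iic n, Metric.closedBall (u i) ((m + 1 : ℝ)⁻¹) with hS
  have hSclosed : ∀ m n, IsClosed (S m n) := fun m n =>
    (Set.finite_Iic n).isClosed_biUnion fun i _ => Metric.isClosed_closedBall
  have hSmono : ∀ m, Monotone (S m) := fun m a b hab =>
    Set.biUnion_subset_biUnion_left (Set.Iic_subset_Iic.mpr hab)
  have hScover : ∀ m, (⋃ n, S m n) = Set.univ := by
    intro m
    apply Set.eq_univ_of_forall
    intro x
    obtain ⟨i, hi⟩ := hu.exists_dist_lt x (by positivity : (0:ℝ) < (m + 1 : ℝ)⁻¹)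
    exact Set.mem_iUnion.mpr ⟨i, Set.mem_biUnion (Set.mem_Iic.mpr le_rfl)
      (Metric.mem_closedBall.mpr hi.le)⟩
  have hN : ∀ m : ℕ, ∃ n : ℕ, μ (S m n)ᶜ ≤ (δ m : ℝ≥0∞) := by
    intro m
    have htend : Tendsto (fun n => μ (S m n)) atTop (𝓝 (μ (⋃ n, S m n))) :=
      tendsto_measure_iUnion_atTop (hSmono m)
    rw [hScover m] at htend
    have hlt : μ Set.univ - δ m < μ Set.univ :=
      ENNReal.sub_lt_self (measure_ne_top μ _) hμ0 (by exact_mod_cast (hδpos m).ne')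
    obtain ⟨n, hn⟩ := (htend.eventually_const_lt hlt).exists
    refine ⟨n, ?_⟩
    rw [measure_compl (hSclosed m n).measurableSet (measure_ne_top μ _)]
    rw [tsub_le_iff_right]
    have h2 : μ Set.univ < μ (S m n) + (δ m : ℝ≥0∞) :=
      ENNReal.lt_add_of_sub_lt_right (Or.inl (measure_ne_top μ _)) hn
    rw [add_comm] at h2
    exact h2.le
  choose N hNle using hN
  refine ⟨⋂ m, S m (N m), ?_, ?_⟩
  · apply TotallyBounded.isCompact_of_isClosed
    · rw [Metric.totallyBounded_iff]
      intro r hr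
      obtain ⟨m, hm⟩ := exists_nat_one_div_lt hr
      refine ⟨u '' Set.Iic (N m), (Set.finite_Iic _).image u, ?_⟩
      intro x hx
      have hx' : x ∈ S m (N m) := Set.mem_iInter.mp hx m
      obtain ⟨i, hi, hxi⟩ := Set.mem_iUnion₂.mp hx'
      refine Set.mem_biUnion (Set.mem_image_of_mem u hi) ?_
      have : dist x (u i) ≤ (m + 1 : ℝ)⁻¹ := Metric.mem_closedBall.mp hxi
      have hm' : ((m : ℝ) + 1)⁻¹ < r := by rwa [one_div] at hm
      exact Metric.mem_ball.mpr (lt_of_le_of_lt this hm')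
    · exact isClosed_iInter fun m => hSclosed m (N m)
  · rw [Set.compl_iInter]
    calc μ (⋃ m, (S m (N m))ᶜ) ≤ ∑' m, μ (S m (N m))ᶜ := measure_iUnion_le _
      _ ≤ ∑' m, (δ m : ℝ≥0∞) := ENNReal.tsum_le_tsum fun m => hNle m
      _ < ε := hδsum

/-- Ulam tightness: any finite Borel measure on a Polish space is tight. -/
lemma exists_isCompact_measure_compl_lt {𝒳 : Type*} [TopologicalSpace 𝒳] [MeasurableSpace 𝒳]
    [BorelSpace 𝒳] [PolishSpace 𝒳] (μ : Measure 𝒳) [IsFiniteMeasure μ]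
    {ε : ℝ≥0∞} (hε : ε ≠ 0) :
    ∃ K : Set 𝒳, IsCompact K ∧ μ Kᶜ < ε := by
  letI := TopologicalSpace.upgradeIsCompletelyMetrizable 𝒳
  exact exists_isCompact_measure_compl_lt_aux μ hε

/-- If `κ` is a Feller Markov kernel into a Polish space and `f` is bounded continuous on
the product, then `y ↦ ∫ f (y, x) ∂(κ y)` is continuous. -/
lemma continuous_integral_bcf {𝒴 𝒳 : Type*}
    [TopologicalSpace 𝒴] [MeasurableSpace 𝒴] [BorelSpace 𝒴] [PolishSpace 𝒴]
    [TopologicalSpace 𝒳] [MeasurableSpace 𝒳] [BorelSpace 𝒳] [PolishSpace 𝒳]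
    (κ : Kernel 𝒴 𝒳) [IsMarkovKernel κ]
    (hκ : ∀ g : BoundedContinuousFunction 𝒳 ℝ, Continuous fun y => ∫ x, g x ∂(κ y))
    (f : BoundedContinuousFunction (𝒴 × 𝒳) ℝ) :
    Continuous fun y => ∫ x, f (y, x) ∂(κ y) := by
  rw [continuous_iff_continuousAt]
  intro y₀
  rw [ContinuousAt, Metric.tendsto_nhds]
  intro ε' hε'
  set C : ℝ := ‖f‖ with hC
  have hC0 : 0 ≤ C := norm_nonneg f
  set ε : ℝ := ε' / (3 + 4 * C) with hεdef
  have hεpos : 0 < ε := by positivity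
  have hεlt : (2 + 4 * C) * ε < ε' := by
    rw [hεdef]
    rw [div_eq_inv_mul, ← mul_assoc]
    have h1 : (2 + 4 * C) * (3 + 4 * C)⁻¹ < 1 := by
      rw [mul_inv_lt_iff₀ (by positivity)]
      linarith
    calc (2 + 4 * C) * (3 + 4 * C)⁻¹ * ε' < 1 * ε' := by
          apply mul_lt_mul_of_pos_right h1 hε'
      _ = ε' := one_mul ε'
  -- tightness of κ y₀
  obtain ⟨K, hKcomp, hKlt⟩ :=
    exists_isCompact_measure_compl_lt (κ y₀) (ε := ENNReal.ofReal ε)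
      (by simp [ENNReal.ofReal_eq_zero, not_le, hεpos])
  -- tube lemma
  have hO : IsOpen {p : 𝒴 × 𝒳 | |f p - f (y₀, p.2)| < ε} := by
    have hcont : Continuous fun p : 𝒴 × 𝒳 => |f p - f (y₀, p.2)| := by
      apply Continuous.abs
      exact f.continuous.sub (f.continuous.comp (by fun_prop))
    exact isOpen_lt hcont continuous_const
  have hsub : {y₀} ×ˢ K ⊆ {p : 𝒴 × 𝒳 | |f p - f (y₀, p.2)| < ε} := by
    rintro ⟨y, x⟩ ⟨hy, -⟩
    simp only [Set.mem_singleton_iff] at hy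
    subst hy
    simpa using hεpos
  obtain ⟨v₁, v₂, hv₁, hv₂, hy₀v₁, hKv₂, hvsub⟩ :=
    generalized_tube_lemma isCompact_singleton hKcomp hO hsub
  -- eventually facts
  set g₀ : BoundedContinuousFunction 𝒳 ℝ :=
    f.compContinuous ⟨fun x => (y₀, x), by fun_prop⟩ with hg₀
  have ev1 : ∀ᶠ y in 𝓝 y₀, |(∫ x, g₀ x ∂(κ y)) - ∫ x, g₀ x ∂(κ y₀)| < ε := by
    have := Metric.tendsto_nhds.mp ((hκ g₀).tendsto y₀) ε hεpos
    simpa [Real.dist_eq] using this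
  have ev2 : ∀ᶠ y in 𝓝 y₀, y ∈ v₁ := hv₁.mem_nhds (hy₀v₁ rfl)
  have ev3 : ∀ᶠ y in 𝓝 y₀, κ y v₂ᶜ < 2 * ENNReal.ofReal ε := by
    set κP : 𝒴 → ProbabilityMeasure 𝒳 := fun y => ⟨κ y, inferInstance⟩ with hκP
    have hκPtend : Tendsto κP (𝓝 y₀) (𝓝 (κP y₀)) := by
      rw [ProbabilityMeasure.tendsto_iff_forall_integral_tendsto]
      exact fun g => (hκ g).tendsto y₀
    have hlimsup := ProbabilityMeasure.limsup_measure_closed_le_of_tendsto hκPtend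
      (hv₂.isClosed_compl)
    have h1 : (κ y₀) v₂ᶜ < ENNReal.ofReal ε :=
      lt_of_le_of_lt (measure_mono (Set.compl_subset_compl.mpr hKv₂)) hKlt
    have h2 : (𝓝 y₀).limsup (fun y => κ y v₂ᶜ) < 2 * ENNReal.ofReal ε := by
      refine lt_of_le_of_lt hlimsup (lt_of_lt_of_le h1 ?_)
      nth_rewrite 1 [← one_mul (ENNReal.ofReal ε)]
      gcongr
      exact one_le_two
    exact eventually_lt_of_limsup_lt h2
  -- combine
  filter_upwards [ev1, ev2, ev3] with y h1 h2 h3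
  haveI : IsProbabilityMeasure (κ y) := inferInstance
  set gy : BoundedContinuousFunction 𝒳 ℝ :=
    f.compContinuous ⟨fun x => (y, x), by fun_prop⟩ with hgy
  have hint : ∀ z : 𝒴, Integrable (fun x => f (z, x)) (κ y) := fun z =>
    (f.compContinuous ⟨fun x => (z, x), by fun_prop⟩).integrable (κ y)
  have key1 : |(∫ x, f (y, x) ∂(κ y)) - ∫ x, f (y₀, x) ∂(κ y)| ≤ ε + 2 * C * 2 * ε := by
    rw [← integral_sub (hint y) (hint y₀)]
    have step1 : |∫ x, (f (y, x) - f (y₀, x)) ∂(κ y)| ≤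
        ∫ x, |f (y, x) - f (y₀, x)| ∂(κ y) := by
      simpa using norm_integral_le_integral_norm (μ := κ y)
        (fun x => f (y, x) - f (y₀, x))
    refine le_trans step1 ?_
    have hbd : ∀ x, |f (y, x) - f (y₀, x)| ≤
        ε + Set.indicator v₂ᶜ (fun _ => 2 * C) x := by
      intro x
      by_cases hx : x ∈ v₂
      · have : (y, x) ∈ v₁ ×ˢ v₂ := ⟨h2, hx⟩
        have := hvsub this
        simp only [Set.mem_setOf_eq] at this
        have hind : Set.indicator v₂ᶜ (fun _ => 2 * C) x = 0 :=
          Set.indicator_of_notMem (by simpa using hx) _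
        rw [hind, add_zero]
        exact this.le
      · have hind : Set.indicator v₂ᶜ (fun _ => 2 * C) x = 2 * C :=
          Set.indicator_of_mem (by simpa using hx) _
        rw [hind]
        have b1 : |f (y, x)| ≤ C := f.norm_coe_le_norm (y, x)
        have b2 : |f (y₀, x)| ≤ C := f.norm_coe_le_norm (y₀, x)
        calc |f (y, x) - f (y₀, x)| ≤ |f (y, x)| + |f (y₀, x)| := abs_sub _ _
          _ ≤ C + C := add_le_add b1 b2
          _ ≤ ε + 2 * C := by linarith
    have hintabs : Integrable (fun x => |f (y, x) - f (y₀, x)|) (κ y) :=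
      ((hint y).sub (hint y₀)).abs
    have hintrhs : Integrable
        (fun x => ε + Set.indicator v₂ᶜ (fun _ => 2 * C) x) (κ y) := by
      apply (integrable_const ε).add
      exact (integrable_const (2 * C)).indicator hv₂.isClosed_compl.measurableSet
    refine le_trans (integral_mono hintabs hintrhs hbd) ?_
    rw [integral_add (integrable_const ε)
      ((integrable_const (2 * C)).indicator hv₂.isClosed_compl.measurableSet)]
    rw [integral_indicator_const _ hv₂.isClosed_compl.measurableSet]
    simp only [integral_const, measureReal_def, measure_univ, ENNReal.toReal_one, one_smul, smul_eq_mul]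
    have htoReal : ((κ y) v₂ᶜ).toReal ≤ 2 * ε := by
      have hne : (κ y) v₂ᶜ ≠ ∞ := measure_ne_top _ _
      have : ((κ y) v₂ᶜ).toReal < (2 * ENNReal.ofReal ε).toReal :=
        ENNReal.toReal_lt_toReal hne (by
          simp [ENNReal.mul_eq_top, ENNReal.ofReal_ne_top]) |>.mpr h3
      rw [ENNReal.toReal_mul, ENNReal.toReal_ofNat, ENNReal.toReal_ofReal hεpos.le] at this
      linarith
    have : 2 * C * ((κ y) v₂ᶜ).toReal ≤ 2 * C * (2 * ε) := by
      apply mul_le_mul_of_nonneg_left htoReal (by positivity)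
    linarith
  have key2 : |(∫ x, f (y₀, x) ∂(κ y)) - ∫ x, f (y₀, x) ∂(κ y₀)| < ε := by
    simpa [hg₀] using h1
  rw [Real.dist_eq]
  have htri := abs_sub_le (∫ x, f (y, x) ∂(κ y)) (∫ x, f (y₀, x) ∂(κ y))
    (∫ x, f (y₀, x) ∂(κ y₀))
  linarith [key1, key2, hεlt]

/-- If `κ` is a weakly (Feller) continuous Markov kernel between Polish
spaces and `ν_α → ν₀` weakly, then the composition-product measures `ν_α ⊗ₘ κ` converge
weakly to `ν₀ ⊗ₘ κ`. -/
theorem weakTendsto_compProd_of_weakTendsto {𝒴 𝒳 : Type*}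
    [TopologicalSpace 𝒴] [MeasurableSpace 𝒴] [BorelSpace 𝒴] [PolishSpace 𝒴]
    [TopologicalSpace 𝒳] [MeasurableSpace 𝒳] [BorelSpace 𝒳] [PolishSpace 𝒳]
    (κ : Kernel 𝒴 𝒳) (hmk : IsMarkovKernel κ)
    (hκ : ∀ g : BoundedContinuousFunction 𝒳 ℝ, Continuous fun y => ∫ x, g x ∂(κ y))
    (ν : ℕ → Measure 𝒴) (ν0 : Measure 𝒴)
    (hprob : ∀ α, IsProbabilityMeasure (ν α)) (hprob0 : IsProbabilityMeasure ν0)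
    (hconv : WeakTendsto ν ν0) :
    WeakTendsto (fun α => (ν α) ⊗ₘ κ) (ν0 ⊗ₘ κ) := by
  haveI := hmk
  intro f
  have hFcont : Continuous fun y => ∫ x, f (y, x) ∂(κ y) :=
    continuous_integral_bcf κ hκ f
  have hFbdd : ∀ y : 𝒴, ‖∫ x, f (y, x) ∂(κ y)‖ ≤ ‖f‖ := by
    intro y
    calc ‖∫ x, f (y, x) ∂(κ y)‖ ≤ ‖f‖ * ((κ y) Set.univ).toReal :=
        norm_integral_le_of_norm_le_const (Eventually.of_forall fun x =>
          f.norm_coe_le_norm (y, x))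
      _ = ‖f‖ := by simp
  set F : BoundedContinuousFunction 𝒴 ℝ :=
    BoundedContinuousFunction.ofNormedAddCommGroup _ hFcont ‖f‖ hFbdd with hF
  have key : ∀ (μ : Measure 𝒴), IsProbabilityMeasure μ →
      ∫ p, f p ∂(μ ⊗ₘ κ) = ∫ y, F y ∂μ := by
    intro μ hμ
    haveI := hμ
    rw [Measure.integral_compProd (f.integrable (μ ⊗ₘ κ))]
    rfl
  have h0 := key ν0 hprob0
  have hα : ∀ α, ∫ p, f p ∂((ν α) ⊗ₘ κ) = ∫ y, F y ∂(ν α) := fun α => key (ν α) (hprob α)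
  rw [h0]
  simp only [hα]
  exact hconv F


end Statements

end PaperDI
end

section
/- Let P be a feedback family and Q a forward family, with ν_{0,n} the Y_{0,n}-marginal of the joint measure ←P⊗→Q. Then for every Borel probability measure λ on Y_{0,n}, the identity D(←P⊗→Q ‖ ←P⊗λ) = I(←P, →Q) + D(ν_{0,n} ‖ λ) holds in the extended reals [0, +∞]. -/
open MeasureTheory ProbabilityTheory Filter
open scoped ENNReal NNReal

namespace PaperDI

variable (X Y : ℕ → Type*) [∀ i, MeasurableSpace (X i)] [∀ i, MeasurableSpace (Y i)]

variable {X Y} {n : ℕ}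

section AuxKL

variable {α β : Type*} [MeasurableSpace α] [MeasurableSpace β]

lemma aux_neg_llr_le (μ ν : Measure α) [IsFiniteMeasure μ] [IsFiniteMeasure ν] (hμν : μ ≪ ν) :
    ∫⁻ x, ENNReal.ofReal (-llr μ ν x) ∂μ ≤ ν Set.univ := by
  rw [← lintegral_rnDeriv_mul hμν (f := fun x => ENNReal.ofReal (-llr μ ν x)) (measurable_llr μ ν).neg.ennreal_ofReal.aemeasurable]
  calc ∫⁻ x, μ.rnDeriv ν x * ENNReal.ofReal (-llr μ ν x) ∂ν
      ≤ ∫⁻ _, 1 ∂ν := by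
        refine lintegral_mono_ae ?_
        filter_upwards [Measure.rnDeriv_lt_top μ ν] with x hx
        set t := (μ.rnDeriv ν x).toReal with ht
        have hr : μ.rnDeriv ν x = ENNReal.ofReal t := (ENNReal.ofReal_toReal hx.ne).symm
        have h0 : 0 ≤ t := ENNReal.toReal_nonneg
        have hllr : llr μ ν x = Real.log t := rfl
        rw [hr, hllr, ← ENNReal.ofReal_mul h0]
        refine le_trans (ENNReal.ofReal_le_ofReal ?_) (by simp : ENNReal.ofReal 1 ≤ 1)
        rcases eq_or_lt_of_le h0 with h | h
        · simp [← h]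
        · have hl := Real.log_le_sub_one_of_pos (inv_pos.mpr h)
          rw [Real.log_inv] at hl
          have : t * t⁻¹ = 1 := mul_inv_cancel₀ h.ne'
          nlinarith
    _ = ν Set.univ := by simp

lemma aux_integral_llr_nonneg (μ ν : Measure α) [IsProbabilityMeasure μ] [IsProbabilityMeasure ν]
    (hμν : μ ≪ ν) (hint : Integrable (llr μ ν) μ) : 0 ≤ ∫ x, llr μ ν x ∂μ := by
  rw [← integral_rnDeriv_smul hμν (f := llr μ ν)]
  have hint2 : Integrable (fun x => (μ.rnDeriv ν x).toReal • llr μ ν x) ν :=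
    (integrable_rnDeriv_smul_iff hμν).mpr hint
  have hbound : ∀ x, (μ.rnDeriv ν x).toReal - 1 ≤ (μ.rnDeriv ν x).toReal • llr μ ν x := by
    intro x
    set t := (μ.rnDeriv ν x).toReal with ht
    have h0 : 0 ≤ t := ENNReal.toReal_nonneg
    have hllr : llr μ ν x = Real.log t := rfl
    rw [hllr, smul_eq_mul]
    rcases eq_or_lt_of_le h0 with h | h
    · simp [← h]
    · have hl := Real.log_le_sub_one_of_pos (inv_pos.mpr h)
      rw [Real.log_inv] at hl
      have : t * t⁻¹ = 1 := mul_inv_cancel₀ h.ne'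
      nlinarith
  have hmono : ∫ x, ((μ.rnDeriv ν x).toReal - 1) ∂ν
      ≤ ∫ x, (μ.rnDeriv ν x).toReal • llr μ ν x ∂ν := by
    refine integral_mono (Measure.integrable_toReal_rnDeriv.sub (integrable_const 1)) hint2 ?_
    exact fun x => hbound x
  refine le_trans (le_of_eq ?_) hmono
  rw [integral_sub Measure.integrable_toReal_rnDeriv (integrable_const 1),
    Measure.integral_toReal_rnDeriv hμν]
  simp

lemma aux_ofReal_add_ofReal_neg (x : ℝ) :
    ENNReal.ofReal x + ENNReal.ofReal (-x) = ‖x‖ₑ := by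
  rcases le_total 0 x with h | h
  · rw [ENNReal.ofReal_of_nonpos (neg_nonpos.mpr h), add_zero, Real.enorm_eq_ofReal h]
  · rw [ENNReal.ofReal_of_nonpos h, zero_add, ← enorm_neg, Real.enorm_eq_ofReal
      (neg_nonneg.mpr h)]

lemma aux_integrable_iff {μ : Measure α} {f : α → ℝ} (hf : Measurable f) :
    Integrable f μ ↔
      (∫⁻ x, ENNReal.ofReal (f x) ∂μ < ∞ ∧ ∫⁻ x, ENNReal.ofReal (-f x) ∂μ < ∞) := by
  constructor
  · intro h
    have h2 := h.hasFiniteIntegral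
    rw [hasFiniteIntegral_def] at h2
    constructor
    · refine lt_of_le_of_lt (lintegral_mono fun x => ?_) h2
      rw [← aux_ofReal_add_ofReal_neg (f x)]; exact le_self_add
    · refine lt_of_le_of_lt (lintegral_mono fun x => ?_) h2
      rw [← aux_ofReal_add_ofReal_neg (f x)]; exact le_add_self
  · rintro ⟨h1, h2⟩
    refine ⟨hf.aestronglyMeasurable, ?_⟩
    rw [hasFiniteIntegral_def]
    calc ∫⁻ x, ‖f x‖ₑ ∂μ
        = ∫⁻ x, (ENNReal.ofReal (f x) + ENNReal.ofReal (-f x)) ∂μ := by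
          simp_rw [aux_ofReal_add_ofReal_neg]
      _ = ∫⁻ x, ENNReal.ofReal (f x) ∂μ + ∫⁻ x, ENNReal.ofReal (-f x) ∂μ :=
          lintegral_add_left hf.ennreal_ofReal _
      _ < ∞ := ENNReal.add_lt_top.mpr ⟨h1, h2⟩

lemma aux_compProd_withDensity {lam ν : Measure α} [IsFiniteMeasure lam] [IsFiniteMeasure ν]
    (κ : Kernel α β) [IsMarkovKernel κ] {g : α → ℝ≥0∞} (hg : Measurable g)
    (hgd : lam.withDensity g = ν) :
    ν ⊗ₘ κ = (lam ⊗ₘ κ).withDensity (fun p => g p.1) := by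
  ext s hs
  rw [Measure.compProd_apply hs, withDensity_apply _ hs, ← hgd,
    lintegral_withDensity_eq_lintegral_mul _ hg (Kernel.measurable_kernel_prodMk_left hs),
    ← lintegral_indicator hs (fun p => g p.1),
    Measure.lintegral_compProd (Measurable.indicator (f := fun p : α × β => g p.1) (hg.comp measurable_fst) hs)]
  refine lintegral_congr fun a => ?_
  have hind : ∀ b, s.indicator (fun p : α × β => g p.1) (a, b)
      = (Prod.mk a ⁻¹' s).indicator (fun _ => g a) b := by
    intro b
    by_cases hb : (a, b) ∈ s <;> simp [Set.indicator, hb]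
  simp_rw [hind]
  rw [lintegral_indicator (measurable_prodMk_left hs) _, setLIntegral_const]
  rfl

lemma aux_ac_withDensity {σ μ : Measure α} {f : α → ℝ≥0∞} (hf : Measurable f)
    (hμσ : μ ≪ σ) (h0 : μ {x | f x = 0} = 0) : μ ≪ σ.withDensity f := by
  refine Measure.AbsolutelyContinuous.mk fun s hs h => ?_
  rw [withDensity_apply _ hs] at h
  have h' : σ ({x | f x ≠ 0} ∩ s) = 0 := by
    have h2 := (setLIntegral_eq_zero_iff hs hf).mp h
    rw [Filter.eventually_iff, mem_ae_iff] at h2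
    simp only [Set.compl_setOf, Classical.not_imp] at h2
    refine measure_mono_null (fun x hx => ?_) h2
    exact ⟨hx.2, hx.1⟩
  have hμ' : μ ({x | f x ≠ 0} ∩ s) = 0 := hμσ h'
  refine le_antisymm ?_ zero_le
  calc μ s ≤ μ (({x | f x ≠ 0} ∩ s) ∪ {x | f x = 0}) := by
        refine measure_mono fun x hx => ?_
        by_cases hfx : f x = 0
        · exact Or.inr hfx
        · exact Or.inl ⟨hfx, hx⟩
    _ ≤ μ ({x | f x ≠ 0} ∩ s) + μ {x | f x = 0} := measure_union_le _ _
    _ = 0 := by rw [hμ', h0, add_zero]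

lemma aux_KL_map_equiv (e : α ≃ᵐ β) (μ ν : Measure α) [IsFiniteMeasure μ] [IsFiniteMeasure ν] :
    KL (μ.map e) (ν.map e) = KL μ ν := by
  classical
  have hac : μ.map e ≪ ν.map e ↔ μ ≪ ν := by
    constructor
    · intro h
      have h2 := h.map e.symm.measurable
      rwa [e.map_symm_map, e.map_symm_map] at h2
    · intro h
      exact h.map e.measurable
  by_cases h : μ ≪ ν
  · have key : (fun x => llr (μ.map e) (ν.map e) (e x)) =ᵐ[μ] llr μ ν := by
      filter_upwards [h.ae_le (e.measurableEmbedding.rnDeriv_map μ ν)] with x hx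
      simp only [llr, hx]
    have hint : Integrable (llr (μ.map e) (ν.map e)) (μ.map e) ↔ Integrable (llr μ ν) μ := by
      rw [integrable_map_equiv e]
      exact integrable_congr key
    have hI : ∫ y, llr (μ.map e) (ν.map e) y ∂(μ.map e) = ∫ x, llr μ ν x ∂μ := by
      rw [integral_map_equiv e]
      exact integral_congr_ae key
    unfold KL
    by_cases hi : Integrable (llr μ ν) μ
    · rw [if_pos ⟨hac.mpr h, hint.mpr hi⟩, if_pos ⟨h, hi⟩, hI]
    · rw [if_neg (by simp only [hint]; tauto), if_neg (by tauto)]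
  · unfold KL
    rw [if_neg (by rw [hac]; tauto), if_neg (by tauto)]

lemma aux_KL_chain (μ' : Measure (α × β)) [IsProbabilityMeasure μ'] (lam : Measure α)
    [IsProbabilityMeasure lam] (κ : Kernel α β) [IsMarkovKernel κ] :
    KL μ' (lam ⊗ₘ κ) = KL μ' ((μ'.map Prod.fst) ⊗ₘ κ) + KL (μ'.map Prod.fst) lam := by
  classical
  set ν : Measure α := μ'.map Prod.fst with hν_def
  haveI : IsProbabilityMeasure ν := Measure.isProbabilityMeasure_map measurable_fst.aemeasurable
  by_cases h1 : μ' ≪ lam ⊗ₘ κ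
  · -- absolute continuity of the marginal
    have hν : ν ≪ lam := by
      have h2 := h1.map measurable_fst
      have h3 : (lam ⊗ₘ κ).map Prod.fst = lam := Measure.fst_compProd lam κ
      rwa [h3] at h2
    set g : α → ℝ≥0∞ := ν.rnDeriv lam with hg_def
    have hg : Measurable g := Measure.measurable_rnDeriv ν lam
    have hgd : lam.withDensity g = ν := Measure.withDensity_rnDeriv_eq ν lam hν
    have hwd : ν ⊗ₘ κ = (lam ⊗ₘ κ).withDensity (fun p => g p.1) :=
      aux_compProd_withDensity κ hg hgd
    have hms : MeasurableSet {a | g a = 0} :=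
      show MeasurableSet (g ⁻¹' {0}) from hg (measurableSet_singleton 0)
    have hν0 : ν {a | g a = 0} = 0 := by
      rw [← hgd, withDensity_apply _ hms,
        setLIntegral_congr_fun_ae hms (Filter.Eventually.of_forall fun x hx => hx)]
      simp
    have hμ'0 : μ' {p : α × β | g p.1 = 0} = 0 := by
      have : {p : α × β | g p.1 = 0} = Prod.fst ⁻¹' {a | g a = 0} := rfl
      rw [this, ← Measure.map_apply measurable_fst hms]
      exact hν0
    have h2 : μ' ≪ ν ⊗ₘ κ := by
      rw [hwd]
      exact aux_ac_withDensity (hg.comp measurable_fst) h1 hμ'0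
    -- the a.e. identity for log-likelihood ratios
    have hrn : (ν ⊗ₘ κ).rnDeriv (lam ⊗ₘ κ) =ᵐ[lam ⊗ₘ κ] fun p => g p.1 := by
      rw [hwd]
      exact Measure.rnDeriv_withDensity (lam ⊗ₘ κ) (hg.comp measurable_fst)
    have hmul : μ'.rnDeriv (ν ⊗ₘ κ) * (ν ⊗ₘ κ).rnDeriv (lam ⊗ₘ κ)
        =ᵐ[lam ⊗ₘ κ] μ'.rnDeriv (lam ⊗ₘ κ) := Measure.rnDeriv_mul_rnDeriv h2
    have aeq : llr μ' (lam ⊗ₘ κ)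
        =ᵐ[μ'] fun p => llr μ' (ν ⊗ₘ κ) p + llr ν lam p.1 := by
      filter_upwards [h1.ae_le hmul, h1.ae_le hrn, Measure.rnDeriv_pos h1,
        Measure.rnDeriv_pos h2, h1.ae_le (Measure.rnDeriv_lt_top μ' (lam ⊗ₘ κ)),
        h2.ae_le (Measure.rnDeriv_lt_top μ' (ν ⊗ₘ κ))] with p e1 e2 hp1 hp2 hf1 hf2
      have hc0 : g p.1 ≠ 0 := by
        intro hc
        rw [Pi.mul_apply, e2, hc, mul_zero] at e1
        exact hp1.ne' e1.symm
      have hct : g p.1 ≠ ∞ := by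
        intro hc
        rw [Pi.mul_apply, e2, hc, ENNReal.mul_top hp2.ne'] at e1
        exact hf1.ne e1.symm
      have heq : μ'.rnDeriv (lam ⊗ₘ κ) p = μ'.rnDeriv (ν ⊗ₘ κ) p * g p.1 := by
        rw [← e1, Pi.mul_apply, e2]
      show Real.log (μ'.rnDeriv (lam ⊗ₘ κ) p).toReal = _
      rw [heq, ENNReal.toReal_mul]
      have ha0 : (μ'.rnDeriv (ν ⊗ₘ κ) p).toReal ≠ 0 := by
        rw [ENNReal.toReal_ne_zero]; exact ⟨hp2.ne', hf2.ne⟩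
      have hb0 : (g p.1).toReal ≠ 0 := by
        rw [ENNReal.toReal_ne_zero]; exact ⟨hc0, hct⟩
      rw [Real.log_mul ha0 hb0]
      rfl
    -- notation for the three log-likelihood ratios
    set L : α × β → ℝ := llr μ' (lam ⊗ₘ κ) with hL
    set M : α × β → ℝ := llr μ' (ν ⊗ₘ κ) with hM
    set R : α × β → ℝ := fun p => llr ν lam p.1 with hR
    have hLmeas : Measurable L := measurable_llr _ _
    have hMmeas : Measurable M := measurable_llr _ _
    have hRmeas : Measurable R := (measurable_llr _ _).comp measurable_fst
    -- negative parts are finite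
    have negL : ∫⁻ p, ENNReal.ofReal (-L p) ∂μ' < ∞ :=
      lt_of_le_of_lt (aux_neg_llr_le μ' (lam ⊗ₘ κ) h1) (by simp [measure_lt_top])
    have negM : ∫⁻ p, ENNReal.ofReal (-M p) ∂μ' < ∞ :=
      lt_of_le_of_lt (aux_neg_llr_le μ' (ν ⊗ₘ κ) h2) (by simp [measure_lt_top])
    have hmapR : ∀ h : α → ℝ≥0∞, Measurable h →
        ∫⁻ a, h a ∂ν = ∫⁻ p, h p.1 ∂μ' := by
      intro h hh
      rw [hν_def, lintegral_map hh measurable_fst]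
    have negRν : ∫⁻ a, ENNReal.ofReal (-llr ν lam a) ∂ν < ∞ :=
      lt_of_le_of_lt (aux_neg_llr_le ν lam hν) (by simp [measure_lt_top])
    have negR : ∫⁻ p, ENNReal.ofReal (-R p) ∂μ' < ∞ := by
      rw [← hmapR (fun a => ENNReal.ofReal (-llr ν lam a)) (measurable_llr ν lam).neg.ennreal_ofReal]
      exact negRν
    -- positive part comparisons
    have posLle : ∫⁻ p, ENNReal.ofReal (L p) ∂μ'
        ≤ ∫⁻ p, ENNReal.ofReal (M p) ∂μ' + ∫⁻ p, ENNReal.ofReal (R p) ∂μ' := by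
      rw [← lintegral_add_left hMmeas.ennreal_ofReal]
      refine lintegral_mono_ae ?_
      filter_upwards [aeq] with p hp
      rw [hp]
      exact ENNReal.ofReal_add_le
    have posMle : ∫⁻ p, ENNReal.ofReal (M p) ∂μ'
        ≤ ∫⁻ p, ENNReal.ofReal (L p) ∂μ' + ∫⁻ p, ENNReal.ofReal (-R p) ∂μ' := by
      rw [← lintegral_add_left hLmeas.ennreal_ofReal]
      refine lintegral_mono_ae ?_
      filter_upwards [aeq] with p hp
      have : M p = L p + (-R p) := by rw [hp]; ring
      rw [this]
      exact ENNReal.ofReal_add_le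
    have posRle : ∫⁻ p, ENNReal.ofReal (R p) ∂μ'
        ≤ ∫⁻ p, ENNReal.ofReal (L p) ∂μ' + ∫⁻ p, ENNReal.ofReal (-M p) ∂μ' := by
      rw [← lintegral_add_left hLmeas.ennreal_ofReal]
      refine lintegral_mono_ae ?_
      filter_upwards [aeq] with p hp
      have : R p = L p + (-M p) := by rw [hp]; ring
      rw [this]
      exact ENNReal.ofReal_add_le
    have hintR : Integrable R μ' ↔ Integrable (llr ν lam) ν := by
      rw [hν_def]
      exact (integrable_map_measure (stronglyMeasurable_llr ν lam).aestronglyMeasurable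
        measurable_fst.aemeasurable).symm
    -- integrability equivalence
    have hiff : Integrable L μ' ↔ (Integrable M μ' ∧ Integrable (llr ν lam) ν) := by
      rw [aux_integrable_iff hLmeas, aux_integrable_iff hMmeas, ← hintR,
        aux_integrable_iff hRmeas]
      constructor
      · rintro ⟨h1', _⟩
        exact ⟨⟨lt_of_le_of_lt posMle (ENNReal.add_lt_top.mpr ⟨h1', negR⟩), negM⟩,
          ⟨lt_of_le_of_lt posRle (ENNReal.add_lt_top.mpr ⟨h1', negM⟩), negR⟩⟩
      · rintro ⟨⟨hm, _⟩, ⟨hr, _⟩⟩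
        exact ⟨lt_of_le_of_lt posLle (ENNReal.add_lt_top.mpr ⟨hm, hr⟩), negL⟩
    by_cases hint : Integrable M μ' ∧ Integrable (llr ν lam) ν
    · obtain ⟨hintM, hintRν⟩ := hint
      have hintL : Integrable L μ' := hiff.mpr ⟨hintM, hintRν⟩
      have hintR' : Integrable R μ' := hintR.mpr hintRν
      have hIR : ∫ p, R p ∂μ' = ∫ a, llr ν lam a ∂ν := by
        rw [hν_def, integral_map measurable_fst.aemeasurable
          (stronglyMeasurable_llr ν lam).aestronglyMeasurable]
      have hIL : ∫ p, L p ∂μ' = ∫ p, M p ∂μ' + ∫ a, llr ν lam a ∂ν := by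
        rw [← hIR, ← integral_add hintM hintR']
        exact integral_congr_ae aeq
      have h0M : 0 ≤ ∫ p, M p ∂μ' := aux_integral_llr_nonneg μ' (ν ⊗ₘ κ) h2 hintM
      have h0R : 0 ≤ ∫ a, llr ν lam a ∂ν := aux_integral_llr_nonneg ν lam hν hintRν
      unfold KL
      rw [if_pos ⟨h1, hintL⟩, if_pos ⟨h2, hintM⟩, if_pos ⟨hν, hintRν⟩, hIL,
        ENNReal.ofReal_add h0M h0R]
    · have hintL : ¬ Integrable L μ' := fun h => hint (hiff.mp h)
      unfold KL
      rw [if_neg (by tauto)]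
      rcases not_and_or.mp hint with h | h
      · rw [if_neg (show ¬(μ' ≪ ν ⊗ₘ κ ∧ Integrable (llr μ' (ν ⊗ₘ κ)) μ') by tauto)]
        simp
      · rw [if_neg (show ¬(ν ≪ lam ∧ Integrable (llr ν lam) ν) by tauto)]
        simp
  · -- no absolute continuity: both sides are `⊤`
    unfold KL
    rw [if_neg (by tauto)]
    by_cases h2 : μ' ≪ ν ⊗ₘ κ
    · have hν : ¬ ν ≪ lam := by
        intro hν
        exact h1 (h2.trans (hν.compProd_left κ))
      rw [if_neg (show ¬(ν ≪ lam ∧ Integrable (llr ν lam) ν) by tauto)]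
      simp
    · rw [if_neg (show ¬(μ' ≪ ν ⊗ₘ κ ∧ Integrable (llr μ' (ν ⊗ₘ κ)) μ') by tauto)]
      simp

end AuxKL

section AuxInstances

variable {X Y : ℕ → Type*} [∀ i, MeasurableSpace (X i)] [∀ i, MeasurableSpace (Y i)] {n : ℕ}

lemma aux_isMarkovKernel_back (P : FeedbackFamily X Y n) :
    ∀ k (h : k ≤ n), IsMarkovKernel (back P k h)
  | 0, h => by
    rw [back]
    haveI := P.markov ⟨0, Nat.succ_pos n⟩
    exact Kernel.IsMarkovKernel.map _
      ((measurable_finSnoc (Z := X) 0).comp (measurable_const.prodMk measurable_id))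
  | (k + 1), h => by
    haveI := aux_isMarkovKernel_back P k (by omega)
    haveI := P.markov ⟨k + 1, by omega⟩
    rw [back]
    exact Kernel.IsMarkovKernel.map _
      ((measurable_finSnoc (Z := X) (k + 1)))

lemma aux_isProbabilityMeasure_jointAux (P : FeedbackFamily X Y n) (Q : ForwardFamily X Y n) :
    ∀ k (h : k ≤ n + 1), IsProbabilityMeasure (jointAux P Q k h)
  | 0, h => by rw [jointAux]; infer_instance
  | (k + 1), h => by
    haveI := aux_isProbabilityMeasure_jointAux P Q k (by omega)
    haveI := P.markov ⟨k, by omega⟩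
    haveI := Q.markov ⟨k, by omega⟩
    rw [jointAux]
    dsimp only
    haveI : IsProbabilityMeasure ((jointAux P Q k (by omega) ⊗ₘ P.p ⟨k, by omega⟩).map
        (fun t : ((∀ j : Fin k, X j) × (∀ j : Fin k, Y j)) × X k =>
          (t.1.2, (Fin.snoc t.1.1 t.2 : ∀ j : Fin (k + 1), X j)))) :=
      Measure.isProbabilityMeasure_map ((measurable_snd.comp measurable_fst).prodMk
        ((measurable_finSnoc k).comp
          ((measurable_fst.comp measurable_fst).prodMk measurable_snd))).aemeasurable
    exact Measure.isProbabilityMeasure_map ((measurable_snd.comp measurable_fst).prodMk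
      ((measurable_finSnoc k).comp
        ((measurable_fst.comp measurable_fst).prodMk measurable_snd))).aemeasurable

end AuxInstances

section Statements

variable {X Y : ℕ → Type*} {n : ℕ}
  [∀ i, TopologicalSpace (X i)] [∀ i, MeasurableSpace (X i)] [∀ i, BorelSpace (X i)]
  [∀ i, PolishSpace (X i)]
  [∀ i, TopologicalSpace (Y i)] [∀ i, MeasurableSpace (Y i)] [∀ i, BorelSpace (Y i)]
  [∀ i, PolishSpace (Y i)]

/-- For every probability measure `λ` on `Y_{0,n}`,
`D(←P⊗→Q ‖ ←P⊗λ) = I(←P,→Q) + D(ν_{0,n} ‖ λ)` in `[0, ∞]`. -/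
theorem kl_backProd_eq_directedInfo_add_kl_marginal
    (P : FeedbackFamily X Y n) (Q : ForwardFamily X Y n)
    (lam : Measure (∀ j : Fin (n + 1), Y j)) (hlam : IsProbabilityMeasure lam) :
    KL (joint P Q) (backProd P lam) = DI P Q + KL (nu P Q) lam := by
  haveI := hlam
  haveI : IsMarkovKernel (back P n le_rfl) := aux_isMarkovKernel_back P n le_rfl
  set κ := (back P n le_rfl).comap (restr n) (measurable_restr n) with hκ
  haveI : IsMarkovKernel κ := by rw [hκ]; infer_instance
  haveI : IsProbabilityMeasure (joint P Q) :=
    aux_isProbabilityMeasure_jointAux P Q (n + 1) le_rfl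
  haveI : IsProbabilityMeasure (nu P Q) :=
    Measure.isProbabilityMeasure_map measurable_snd.aemeasurable
  set e : ((∀ j : Fin (n + 1), Y j) × (∀ j : Fin (n + 1), X j)) ≃ᵐ
      ((∀ j : Fin (n + 1), X j) × (∀ j : Fin (n + 1), Y j)) :=
    MeasurableEquiv.prodComm with he
  set μ' := (joint P Q).map e.symm with hμ'
  haveI : IsProbabilityMeasure μ' := Measure.isProbabilityMeasure_map e.symm.measurable.aemeasurable
  have hback : ∀ (σ : Measure (∀ j : Fin (n + 1), Y j)), IsFiniteMeasure σ →
      KL (joint P Q) (backProd P σ) = KL μ' (σ ⊗ₘ κ) := by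
    intro σ hσ
    have hswap : backProd P σ = (σ ⊗ₘ κ).map e := rfl
    rw [hswap]
    conv_lhs => rw [← e.map_map_symm (ν := joint P Q)]
    exact aux_KL_map_equiv e μ' (σ ⊗ₘ κ)
  have hfst : μ'.map Prod.fst = nu P Q := by
    rw [hμ', Measure.map_map measurable_fst e.symm.measurable]
    have hfs : (Prod.fst ∘ ⇑e.symm : _ → (∀ j : Fin (n + 1), Y j)) = Prod.snd := rfl
    rw [hfs]
    rfl
  rw [hback lam inferInstance, show DI P Q = KL (joint P Q) (backProd P (nu P Q)) from rfl,
    hback (nu P Q) inferInstance, aux_KL_chain μ' lam κ, hfst]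

end Statements

end PaperDI
end
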